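/- arXiv:1307.2689 — 14 statements merged into one kernel-verified Lean document; each statement's English description precedes it below -/
import Mathlib

section
/- The assignment S_i ↦ s_i extends to a group homomorphism π : Ŵ → W, and the kernel of π is exactly the subgroup of Ŵ generated by the elements S_i² (i ∈ I). -/
/-! The natural map `Ŵ → W` and its kernel. -/

namespace PaperAmalgams

variable {I : Type*}

/-- Alternating word `S_i S_j S_i ⋯` with `n` factors, in the free group on `I`. -/
def altWord (i j : I) : ℕ → FreeGroup I
  | 0 => 1
  | n + 1 => FreeGroup.of i * altWord j i n

/-- The edge labels of the Dynkin diagram: `m i j = 2, 3, 4, 6` according as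
`A i j * A j i = 0, 1, 2, 3`, and `∞` (encoded as `0`) if `A i j * A j i ≥ 4`.
(Intended to be used for `i ≠ j`.) -/
def mLabel (A : I → I → ℤ) (i j : I) : ℕ :=
  if A i j * A j i = 0 then 2
  else if A i j * A j i = 1 then 3
  else if A i j * A j i = 2 then 4
  else if A i j * A j i = 3 then 6
  else 0

theorem mLabel_symm (A : I → I → ℤ) (i j : I) : mLabel A i j = mLabel A j i := by
  unfold mLabel; rw [mul_comm]

theorem mLabel_ne_one (A : I → I → ℤ) (i j : I) : mLabel A i j ≠ 1 := by
  unfold mLabel; split_ifs <;> simp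

/-- The defining relators of `Ŵ`. -/
def whatRels (A : I → I → ℤ) : Set (FreeGroup I) :=
  {r | ∃ i j : I, i ≠ j ∧ mLabel A i j ≠ 0 ∧
      r = altWord i j (mLabel A i j) * (altWord j i (mLabel A i j))⁻¹} ∪
  {r | ∃ i j : I, i ≠ j ∧
      r = FreeGroup.of i ^ 2 * FreeGroup.of j * (FreeGroup.of i ^ 2)⁻¹ *
        (if Even (A i j) then (FreeGroup.of j)⁻¹ else FreeGroup.of j)}

/-- The group `Ŵ`. -/
abbrev What (A : I → I → ℤ) : Type _ := PresentedGroup (whatRels A)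

/-- The generator `S_i` of `Ŵ`. -/
def S (A : I → I → ℤ) (i : I) : What A := PresentedGroup.of i

/-- The Coxeter matrix `M` with `M i i = 1` and `M i j = m i j` (where `∞` is
encoded as `0`) for `i ≠ j`. -/
def coxMatrix (A : I → I → ℤ) [DecidableEq I] : CoxeterMatrix I where
  M := Matrix.of fun i j => if i = j then 1 else mLabel A i j
  isSymm := by
    ext i j
    simp only [Matrix.transpose_apply, Matrix.of_apply]
    rcases eq_or_ne i j with h | h
    · simp [h]
    · simp [h, h.symm, mLabel_symm A j i]
  diagonal := by intro i; simp
  off_diagonal := by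
    intro i j h
    simp only [Matrix.of_apply, if_neg h]
    exact mLabel_ne_one A i j

end PaperAmalgams

namespace PaperAmalgams

section Aux
variable {I : Type*} {G : Type*}

/-- Abstract alternating product `x y x ⋯` with `n` factors. -/
def altProd [Monoid G] (x y : G) : ℕ → G
  | 0 => 1
  | n + 1 => x * altProd y x n

lemma map_altProd [Monoid G] {H : Type*} [Monoid H] (F : G →* H) (x y : G) (n : ℕ) :
    F (altProd x y n) = altProd (F x) (F y) n := by
  induction n generalizing x y with
  | zero => simp [altProd]
  | succ n ih => simp [altProd, ih]

lemma map_altWord [Group G] (F : FreeGroup I →* G) (i j : I) (n : ℕ) :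
    F (altWord i j n) = altProd (F (FreeGroup.of i)) (F (FreeGroup.of j)) n := by
  induction n generalizing i j with
  | zero => simp [altWord, altProd]
  | succ n ih => simp [altWord, altProd, ih]

lemma pow_shift [Monoid G] (x y : G) (k : ℕ) : x * (y * x) ^ k = (x * y) ^ k * x := by
  induction k with
  | zero => simp
  | succ k ih => rw [pow_succ, ← mul_assoc, ih, pow_succ]; simp [mul_assoc]

lemma altProd_closed [Monoid G] (x y : G) (m : ℕ) :
    altProd x y m = (x * y) ^ (m / 2) * (if Even m then 1 else x) := by
  induction m generalizing x y with
  | zero => simp [altProd]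
  | succ n ih =>
    show x * altProd y x n = _
    rw [ih y x]
    rcases Nat.even_or_odd n with he | ho
    · obtain ⟨k, rfl⟩ := he
      have h1 : (k + k) / 2 = k := by omega
      have h2 : (k + k + 1) / 2 = k := by omega
      have h3 : Even (k + k) := ⟨k, rfl⟩
      have h4 : ¬ Even (k + k + 1) := by simp [Nat.even_add_one, h3]
      rw [h1, h2, if_pos h3, if_neg h4, mul_one, pow_shift]
    · obtain ⟨k, rfl⟩ := ho
      have h1 : (2 * k + 1) / 2 = k := by omega
      have h2 : (2 * k + 1 + 1) / 2 = k + 1 := by omega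
      have h3 : ¬ Even (2 * k + 1) := by simp [Nat.even_add_one]
      have h4 : Even (2 * k + 1 + 1) := by simp [Nat.even_add_one, h3]
      rw [h1, h2, if_neg h3, if_pos h4, mul_one, ← mul_assoc, pow_shift, pow_succ, mul_assoc]

lemma altProd_mul_inv [Group G] {x y : G} (hx : x * x = 1) (hy : y * y = 1) (m : ℕ) :
    altProd x y m * (altProd y x m)⁻¹ = (x * y) ^ m := by
  have hxi : x⁻¹ = x := inv_eq_of_mul_eq_one_right hx
  have hyi : y⁻¹ = y := inv_eq_of_mul_eq_one_right hy
  have hyx : (y * x)⁻¹ = x * y := by rw [mul_inv_rev, hxi, hyi]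
  rw [altProd_closed, altProd_closed]
  rcases Nat.even_or_odd m with he | ho
  · obtain ⟨k, rfl⟩ := he
    have h1 : (k + k) / 2 = k := by omega
    have h3 : Even (k + k) := ⟨k, rfl⟩
    rw [h1, if_pos h3, if_pos h3, mul_one, mul_one, ← inv_pow, hyx, ← pow_add]
  · obtain ⟨k, rfl⟩ := ho
    have h1 : (2 * k + 1) / 2 = k := by omega
    have h3 : ¬ Even (2 * k + 1) := by simp [Nat.even_add_one]
    rw [h1, if_neg h3, if_neg h3, mul_inv_rev, hyi, ← inv_pow, hyx]
    have h5 : 2 * k + 1 = k + 1 + k := by omega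
    rw [h5, pow_add, pow_add, pow_one]
    simp [mul_assoc]

lemma rel_even_conj [Group G] {a b : G} (h : a * b * a⁻¹ * b⁻¹ = 1) :
    b * a * b⁻¹ = a ∧ b⁻¹ * a * b = a := by
  have h1 : a * b * a⁻¹ = b := by
    have := mul_eq_one_iff_eq_inv.mp h; rwa [inv_inv] at this
  have comm : a * b = b * a := by
    conv_rhs => rw [← h1]
    group
  constructor
  · rw [← comm]; group
  · rw [mul_assoc, comm]; group

lemma rel_odd_conj [Group G] {a b : G} (h : a * b * a⁻¹ * b = 1) :
    b * a * b⁻¹ = a * (b ^ 2)⁻¹ ∧ b⁻¹ * a * b = (b ^ 2)⁻¹ * a := by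
  have h1 : a * b * a⁻¹ = b⁻¹ := mul_eq_one_iff_eq_inv.mp h
  have h2 : a * b⁻¹ * a⁻¹ = b := by
    have := congrArg (fun z => z⁻¹) h1
    simpa [mul_inv_rev, mul_assoc] using this
  have key : b * a = a * b⁻¹ := by
    conv_lhs => rw [← h2]
    group
  have key2 : a * b = b⁻¹ * a := by
    conv_rhs => rw [← h1]
    group
  constructor
  · rw [key]; group
  · rw [mul_assoc, key2]; group

lemma conj_mem_closure [Group G] {s : Set G} {g : G}
    (hg : ∀ x ∈ s, g * x * g⁻¹ ∈ Subgroup.closure s) :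
    ∀ n ∈ Subgroup.closure s, g * n * g⁻¹ ∈ Subgroup.closure s := by
  intro n hn
  induction hn using Subgroup.closure_induction with
  | mem x hx => exact hg x hx
  | one => simpa using one_mem _
  | mul x y hx hy px py =>
    have e : g * (x * y) * g⁻¹ = (g * x * g⁻¹) * (g * y * g⁻¹) := by group
    rw [e]; exact mul_mem px py
  | inv x hx px =>
    have e : g * x⁻¹ * g⁻¹ = (g * x * g⁻¹)⁻¹ := by group
    rw [e]; exact inv_mem px

end Aux

end PaperAmalgams

open PaperAmalgams in
/-- The assignment `S_i ↦ s_i` extends to a homomorphism `π : Ŵ → W` to the Coxeter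
group `W` of the Coxeter matrix `M`, and `ker π` is exactly the subgroup of `Ŵ`
generated by the squares `S_i²`. -/
theorem what_to_coxeter {I : Type*} [DecidableEq I] (A : I → I → ℤ)
    (hA_diag : ∀ i, A i i = 2)
    (hA_off : ∀ i j, i ≠ j → A i j ≤ 0)
    (hA_zero : ∀ i j, A i j = 0 ↔ A j i = 0) :
    ∃ π : What A →* (coxMatrix A).Group,
      (∀ i : I, π (S A i) = (coxMatrix A).simple i) ∧
      MonoidHom.ker π = Subgroup.closure (Set.range fun i : I => S A i ^ 2) := by
  classical
  -- Notation
  set N : Subgroup (What A) := Subgroup.closure (Set.range fun i : I => S A i ^ 2) with hNdef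
  have hMij : ∀ i j : I, i ≠ j → (coxMatrix A) i j = mLabel A i j := by
    intro i j h
    simp [coxMatrix, Matrix.of_apply, h]
  -- Basic facts about the Coxeter group
  have hs2 : ∀ i : I, (coxMatrix A).simple i * (coxMatrix A).simple i = 1 := fun i =>
    (coxMatrix A).toCoxeterSystem.simple_mul_simple_self i
  have hspow : ∀ i j : I,
      ((coxMatrix A).simple i * (coxMatrix A).simple j) ^ (coxMatrix A) i j = 1 := fun i j =>
    (coxMatrix A).toCoxeterSystem.simple_mul_simple_pow i j
  -- The relators are mapped to `1` by `S_i ↦ s_i`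
  have hlift : ∀ r ∈ whatRels A,
      FreeGroup.lift (fun i : I => (coxMatrix A).simple i) r = 1 := by
    intro r hr
    rcases hr with ⟨i, j, hij, hm, rfl⟩ | ⟨i, j, hij, rfl⟩
    · rw [map_mul, map_inv, map_altWord, map_altWord, FreeGroup.lift_apply_of, FreeGroup.lift_apply_of,
        altProd_mul_inv (hs2 i) (hs2 j), ← hMij i j hij]
      exact hspow i j
    · have e : (FreeGroup.lift (fun i : I => (coxMatrix A).simple i))
          (FreeGroup.of i) = (coxMatrix A).simple i := FreeGroup.lift_apply_of
      have esq : (coxMatrix A).simple i ^ 2 = 1 := by rw [sq]; exact hs2 i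
      by_cases hA : Even (A i j)
      · rw [if_pos hA]
        simp only [map_mul, map_pow, map_inv, FreeGroup.lift_apply_of, esq]
        simp
      · rw [if_neg hA]
        simp only [map_mul, map_pow, map_inv, FreeGroup.lift_apply_of, esq]
        simp only [one_mul, inv_one, mul_one]
        exact hs2 j
  -- The homomorphism `π`
  refine ⟨PresentedGroup.toGroup hlift, fun i => PresentedGroup.toGroup.of hlift, ?_⟩
  set π : What A →* (coxMatrix A).Group := PresentedGroup.toGroup hlift with hπdef
  have hπS : ∀ i : I, π (S A i) = (coxMatrix A).simple i := fun i =>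
    PresentedGroup.toGroup.of hlift
  -- Relators hold in `Ŵ`
  have hmk : ∀ r ∈ whatRels A, PresentedGroup.mk (whatRels A) r = 1 := by
    intro r hr
    exact (QuotientGroup.eq_one_iff r).mpr (Subgroup.subset_normalClosure hr)
  have relS : ∀ i j : I, i ≠ j →
      (S A i) ^ 2 * S A j * ((S A i) ^ 2)⁻¹ *
        (if Even (A i j) then (S A j)⁻¹ else S A j) = 1 := by
    intro i j hij
    have h := hmk _ (Or.inr ⟨i, j, hij, rfl⟩)
    simp only [map_mul, map_pow, map_inv, apply_ite (⇑(PresentedGroup.mk (whatRels A)))] at h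
    exact h
  have relAlt : ∀ i j : I, i ≠ j → mLabel A i j ≠ 0 →
      altProd (S A i) (S A j) (mLabel A i j) = altProd (S A j) (S A i) (mLabel A i j) := by
    intro i j hij hm
    have h := hmk _ (Or.inl ⟨i, j, hij, hm, rfl⟩)
    rw [map_mul, map_inv, map_altWord, map_altWord] at h
    exact mul_inv_eq_one.mp h
  -- Generators of `N`
  have hSmem : ∀ i : I, (S A i) ^ 2 ∈ N := fun i => Subgroup.subset_closure ⟨i, rfl⟩
  -- Conjugates of the generators of `N` by generators of `Ŵ` lie in `N`
  have hconj : ∀ j i : I,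
      S A j * (S A i) ^ 2 * (S A j)⁻¹ ∈ N ∧ (S A j)⁻¹ * (S A i) ^ 2 * S A j ∈ N := by
    intro j i
    by_cases hij : i = j
    · subst hij
      constructor
      · rw [show S A i * (S A i) ^ 2 * (S A i)⁻¹ = (S A i) ^ 2 by group]
        exact hSmem i
      · rw [show (S A i)⁻¹ * (S A i) ^ 2 * S A i = (S A i) ^ 2 by group]
        exact hSmem i
    · have h := relS i j hij
      by_cases hA : Even (A i j)
      · rw [if_pos hA] at h
        obtain ⟨e1, e2⟩ := rel_even_conj h
        exact ⟨by rw [e1]; exact hSmem i, by rw [e2]; exact hSmem i⟩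
      · rw [if_neg hA] at h
        obtain ⟨e1, e2⟩ := rel_odd_conj h
        constructor
        · rw [e1]; exact mul_mem (hSmem i) (inv_mem (hSmem j))
        · rw [e2]; exact mul_mem (inv_mem (hSmem j)) (hSmem i)
  -- `N` is normal
  have hH : ∀ g : What A, (∀ n ∈ N, g * n * g⁻¹ ∈ N) ∧ (∀ n ∈ N, g⁻¹ * n * g ∈ N) := by
    let H : Subgroup (What A) :=
      { carrier := {g | (∀ n ∈ N, g * n * g⁻¹ ∈ N) ∧ (∀ n ∈ N, g⁻¹ * n * g ∈ N)}
        one_mem' := ⟨fun n hn => by simpa using hn, fun n hn => by simpa using hn⟩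
        mul_mem' := by
          rintro x y ⟨hx1, hx2⟩ ⟨hy1, hy2⟩
          constructor
          · intro n hn
            rw [show x * y * n * (x * y)⁻¹ = x * (y * n * y⁻¹) * x⁻¹ by group]
            exact hx1 _ (hy1 n hn)
          · intro n hn
            rw [show (x * y)⁻¹ * n * (x * y) = y⁻¹ * (x⁻¹ * n * x) * y by group]
            exact hy2 _ (hx2 n hn)
        inv_mem' := by
          rintro x ⟨hx1, hx2⟩
          constructor
          · intro n hn
            rw [inv_inv]
            exact hx2 n hn
          · intro n hn
            rw [inv_inv]
            exact hx1 n hn }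
    intro g
    have hg : g ∈ H := by
      refine PresentedGroup.generated_by _ H (fun j => ?_) g
      refine ⟨conj_mem_closure ?_, ?_⟩
      · rintro _ ⟨i, rfl⟩
        exact (hconj j i).1
      · have := conj_mem_closure (g := (S A j)⁻¹) (s := Set.range fun i : I => S A i ^ 2) ?_
        · intro n hn
          have h2 := this n hn
          rwa [inv_inv] at h2
        · rintro _ ⟨i, rfl⟩
          rw [inv_inv]
          exact (hconj j i).2
    exact hg
  haveI hN : N.Normal := ⟨fun n hn g => (hH g).1 n hn⟩
  -- The quotient `Ŵ / N` and the lift `W → Ŵ / N`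
  set q : What A →* What A ⧸ N := QuotientGroup.mk' N with hqdef
  have hkerq : q.ker = N := QuotientGroup.ker_mk' N
  have hfsq : ∀ i : I, q (S A i) * q (S A i) = 1 := by
    intro i
    rw [← map_mul]
    have hmem : S A i * S A i ∈ q.ker := by
      rw [hkerq, ← sq]
      exact hSmem i
    exact MonoidHom.mem_ker.mp hmem
  have hlift2 : CoxeterMatrix.IsLiftable (coxMatrix A) (fun i : I => q (S A i)) := by
    intro i j
    by_cases hij : i = j
    · subst hij
      rw [(coxMatrix A).diagonal i, pow_one]
      exact hfsq i
    · rw [hMij i j hij]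
      by_cases hm : mLabel A i j = 0
      · rw [hm, pow_zero]
      · have hb := congrArg q (relAlt i j hij hm)
        rw [map_altProd, map_altProd] at hb
        have h2 := altProd_mul_inv (hfsq i) (hfsq j) (mLabel A i j)
        rw [← h2, hb]
        simp
  set φ : (coxMatrix A).Group →* What A ⧸ N :=
    (coxMatrix A).toCoxeterSystem.lift ⟨fun i : I => q (S A i), hlift2⟩ with hφdef
  have hφ : ∀ i : I, φ ((coxMatrix A).simple i) = q (S A i) := fun i =>
    (coxMatrix A).toCoxeterSystem.lift_apply_simple hlift2 i
  have hcomp : φ.comp π = q := by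
    refine PresentedGroup.ext fun x => ?_
    rw [MonoidHom.comp_apply]
    exact (congrArg φ (hπS x)).trans (hφ x)
  -- Kernel computation
  apply le_antisymm
  · intro g hg
    have h1 : q g = 1 := by
      rw [← hcomp, MonoidHom.comp_apply, MonoidHom.mem_ker.mp hg, map_one]
    have h2 : g ∈ q.ker := MonoidHom.mem_ker.mpr h1
    rwa [hkerq] at h2
  · rw [hNdef]
    refine (Subgroup.closure_le _).mpr ?_
    rintro _ ⟨i, rfl⟩
    have : π (S A i ^ 2) = 1 := by
      rw [map_pow, hπS i, sq]
      exact hs2 i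
    exact MonoidHom.mem_ker.mpr this
end

section
/- For every i ∈ I, the element S_i⁴ is central in the group Ŵ. -/
open PaperAmalgams in
/-- For every `i`, the element `S_i⁴` is central in `Ŵ`. -/
theorem what_fourth_power_central {I : Type*} (A : I → I → ℤ)
    (hA_diag : ∀ i, A i i = 2)
    (hA_off : ∀ i j, i ≠ j → A i j ≤ 0)
    (hA_zero : ∀ i j, A i j = 0 ↔ A j i = 0)
    (i : I) :
    S A i ^ 4 ∈ Subgroup.center (What A) := by
  have key : ∀ j : I, Commute (S A i ^ 4) (S A j) := by
    intro j
    by_cases hij : i = j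
    · subst hij; exact (Commute.self_pow _ 4).symm
    · -- the relator gives: a² b a⁻² = b or b⁻¹
      have hrel : (QuotientGroup.mk (FreeGroup.of i ^ 2 * FreeGroup.of j *
          (FreeGroup.of i ^ 2)⁻¹ *
          (if Even (A i j) then (FreeGroup.of j)⁻¹ else FreeGroup.of j)) : What A) = 1 := by
        rw [QuotientGroup.eq_one_iff]
        exact Subgroup.subset_normalClosure (Or.inr ⟨i, j, hij, rfl⟩)
      set a := S A i with ha
      set b := S A j with hb
      have hmk : a ^ 2 * b * (a ^ 2)⁻¹ *
          (if Even (A i j) then b⁻¹ else b) = 1 := by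
        have hS : ∀ k : I, S A k = (QuotientGroup.mk (FreeGroup.of k) : What A) :=
          fun _ => rfl
        rw [ha, hb, hS i, hS j]
        refine Eq.trans ?_ hrel
        by_cases h : Even (A i j) <;> simp [h, QuotientGroup.mk_mul, QuotientGroup.mk_inv,
          QuotientGroup.mk_pow] <;> rfl
      have hcases : a ^ 2 * b * (a ^ 2)⁻¹ = b ∨ a ^ 2 * b * (a ^ 2)⁻¹ = b⁻¹ := by
        by_cases h : Even (A i j)
        · left; rw [if_pos h] at hmk
          have := hmk
          group at this ⊢
          calc a ^ 2 * b * (a ^ 2)⁻¹ = a ^ 2 * b * (a ^ 2)⁻¹ * b⁻¹ * b := by group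
          _ = b := by rw [hmk]; group
        · right
          rw [if_neg h] at hmk
          calc a ^ 2 * b * (a ^ 2)⁻¹ = a ^ 2 * b * (a ^ 2)⁻¹ * b * b⁻¹ := by group
          _ = b⁻¹ := by rw [hmk]; group
      have h4 : a ^ 4 * b * (a ^ 4)⁻¹ = b := by
        have e4 : a ^ 4 = a ^ 2 * a ^ 2 := by group
        rcases hcases with h | h
        · have hc : a ^ 2 * b = b * a ^ 2 := by
            calc a ^ 2 * b = a ^ 2 * b * (a ^ 2)⁻¹ * a ^ 2 := by group
            _ = b * a ^ 2 := by rw [h]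
          rw [e4]
          calc a ^ 2 * a ^ 2 * b * (a ^ 2 * a ^ 2)⁻¹
              = a ^ 2 * (a ^ 2 * b) * (a ^ 2 * a ^ 2)⁻¹ := by group
          _ = a ^ 2 * (b * a ^ 2) * (a ^ 2 * a ^ 2)⁻¹ := by rw [hc]
          _ = (a ^ 2 * b) * (a ^ 2)⁻¹ := by group
          _ = (b * a ^ 2) * (a ^ 2)⁻¹ := by rw [hc]
          _ = b := by group
        · have hc : a ^ 2 * b = b⁻¹ * a ^ 2 := by
            calc a ^ 2 * b = a ^ 2 * b * (a ^ 2)⁻¹ * a ^ 2 := by group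
            _ = b⁻¹ * a ^ 2 := by rw [h]
          have hc' : a ^ 2 * b⁻¹ = b * a ^ 2 := by
            have : (a ^ 2 * b * (a ^ 2)⁻¹)⁻¹ = (b⁻¹)⁻¹ := by rw [h]
            calc a ^ 2 * b⁻¹ = (a ^ 2 * b * (a ^ 2)⁻¹)⁻¹ * a ^ 2 := by group
            _ = (b⁻¹)⁻¹ * a ^ 2 := by rw [this]
            _ = b * a ^ 2 := by group
          rw [e4]
          calc a ^ 2 * a ^ 2 * b * (a ^ 2 * a ^ 2)⁻¹
              = a ^ 2 * (a ^ 2 * b) * (a ^ 2 * a ^ 2)⁻¹ := by group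
          _ = a ^ 2 * (b⁻¹ * a ^ 2) * (a ^ 2 * a ^ 2)⁻¹ := by rw [hc]
          _ = (a ^ 2 * b⁻¹) * (a ^ 2)⁻¹ := by group
          _ = (b * a ^ 2) * (a ^ 2)⁻¹ := by rw [hc']
          _ = b := by group
      show a ^ 4 * b = b * a ^ 4
      calc a ^ 4 * b = a ^ 4 * b * (a ^ 4)⁻¹ * a ^ 4 := by group
      _ = b * a ^ 4 := by rw [h4]
  rw [Subgroup.mem_center_iff]
  intro g
  have hg : g ∈ Subgroup.closure (Set.range (PresentedGroup.of : I → What A)) := by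
    rw [PresentedGroup.closure_range_of]; exact Subgroup.mem_top g
  have : Commute (S A i ^ 4) g := by
    refine Subgroup.closure_induction (fun x hx => ?_) (Commute.one_right _)
      (fun x y _ _ hx hy => Commute.mul_right hx hy)
      (fun x _ hx => Commute.inv_right hx) hg
    obtain ⟨j, rfl⟩ := hx
    exact key j
  exact this.symm
end

section
/- If i ≠ j in I and A i j is odd, then S_j⁸ = 1 in the group Ŵ. -/
section Aux

variable {G : Type*} [Group G]

private lemma fourth_pow_eq_one {x : G} (key : x⁻¹ * x⁻¹ = x * x) : x ^ 4 = 1 := by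
  have h : (x * x) * (x⁻¹ * x⁻¹) = 1 := by group
  rw [key] at h
  calc x ^ 4 = (x * x) * (x * x) := by
        rw [show (4 : ℕ) = 2 * 2 from rfl, pow_mul, pow_two, pow_two]
    _ = 1 := h

private lemma aux_odd {u a : G} (h1 : u * a * u⁻¹ = a⁻¹) (h2 : a * u * a⁻¹ = u⁻¹) :
    a ^ 4 = 1 := by
  have h2a : a * u = u⁻¹ * a := mul_inv_eq_iff_eq_mul.mp h2
  have hinv : a * u⁻¹ * a⁻¹ = u := by
    have h := congrArg Inv.inv h2
    simpa [mul_inv_rev, mul_assoc] using h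
  have h2b : a * u⁻¹ = u * a := mul_inv_eq_iff_eq_mul.mp hinv
  have hc : (a * a) * u = u * (a * a) := by
    calc (a * a) * u = a * (a * u) := by rw [mul_assoc]
      _ = a * (u⁻¹ * a) := by rw [h2a]
      _ = (a * u⁻¹) * a := by rw [mul_assoc]
      _ = (u * a) * a := by rw [h2b]
      _ = u * (a * a) := by rw [mul_assoc]
  have hc' : u * (a * a) * u⁻¹ = a * a := by rw [← hc, mul_inv_cancel_right]
  have key : a⁻¹ * a⁻¹ = a * a := by
    calc a⁻¹ * a⁻¹ = (u * a * u⁻¹) * (u * a * u⁻¹) := by rw [h1]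
      _ = u * (a * a) * u⁻¹ := by group
      _ = a * a := hc'
  exact fourth_pow_eq_one key

private lemma aux_even {u t : G} (h1 : u * t * u⁻¹ = t⁻¹) (h2 : (t * t) * u = u * (t * t)) :
    t ^ 4 = 1 := by
  have key : t⁻¹ * t⁻¹ = t * t := by
    calc t⁻¹ * t⁻¹ = (u * t * u⁻¹) * (u * t * u⁻¹) := by rw [h1]
      _ = u * (t * t) * u⁻¹ := by group
      _ = (t * t) * u * u⁻¹ := by rw [← h2]
      _ = t * t := by rw [mul_inv_cancel_right]
  exact fourth_pow_eq_one key

end Aux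

open PaperAmalgams in
/-- If `i ≠ j` and `A i j` is odd, then `S_j⁸ = 1` in `Ŵ`. -/
theorem what_eighth_power_eq_one {I : Type*} (A : I → I → ℤ)
    (hA_diag : ∀ i, A i i = 2)
    (hA_off : ∀ i j, i ≠ j → A i j ≤ 0)
    (hA_zero : ∀ i j, A i j = 0 ↔ A j i = 0)
    (i j : I) (hij : i ≠ j) (hodd : Odd (A i j)) :
    S A j ^ 8 = 1 := by
  have key : ∀ r ∈ whatRels A, PresentedGroup.mk (whatRels A) r = 1 := fun r hr =>
    (QuotientGroup.eq_one_iff r).2 (Subgroup.subset_normalClosure hr)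
  set φ := PresentedGroup.mk (whatRels A) with hφdef
  have hφ : ∀ k : I, φ (FreeGroup.of k) = S A k := fun _ => rfl
  set s := S A i with hs
  set t := S A j with ht
  -- relator for (i, j), odd case
  have r1mem : (FreeGroup.of i ^ 2 * FreeGroup.of j * (FreeGroup.of i ^ 2)⁻¹ *
      (if Even (A i j) then (FreeGroup.of j)⁻¹ else FreeGroup.of j)) ∈ whatRels A :=
    Or.inr ⟨i, j, hij, rfl⟩
  rw [if_neg (Int.not_even_iff_odd.2 hodd)] at r1mem
  have h1 := key _ r1mem
  simp only [map_mul, map_pow, map_inv, hφ, ← hs, ← ht] at h1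
  rw [pow_two] at h1
  have h1' : (s * s) * t * (s * s)⁻¹ = t⁻¹ := mul_eq_one_iff_eq_inv.mp h1
  -- relator for (j, i)
  have r2mem : (FreeGroup.of j ^ 2 * FreeGroup.of i * (FreeGroup.of j ^ 2)⁻¹ *
      (if Even (A j i) then (FreeGroup.of i)⁻¹ else FreeGroup.of i)) ∈ whatRels A :=
    Or.inr ⟨j, i, hij.symm, rfl⟩
  by_cases hev : Even (A j i)
  · rw [if_pos hev] at r2mem
    have h2 := key _ r2mem
    simp only [map_mul, map_pow, map_inv, hφ, ← hs, ← ht] at h2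
    rw [pow_two, mul_inv_eq_one] at h2
    have h2c : (t * t) * s = s * (t * t) := mul_inv_eq_iff_eq_mul.mp h2
    have hcomm : Commute (t * t) s := h2c
    have hcomm2 : (t * t) * (s * s) = (s * s) * (t * t) := (hcomm.mul_right hcomm).eq
    have h4 : t ^ 4 = 1 := aux_even h1' hcomm2
    calc t ^ 8 = (t ^ 4) ^ 2 := by rw [← pow_mul]
      _ = 1 := by rw [h4, one_pow]
  · rw [if_neg hev] at r2mem
    have h2 := key _ r2mem
    simp only [map_mul, map_pow, map_inv, hφ, ← hs, ← ht] at h2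
    rw [pow_two] at h2
    have h2' : (t * t) * s * (t * t)⁻¹ = s⁻¹ := mul_eq_one_iff_eq_inv.mp h2
    have hu : (s * s) * (t * t) * (s * s)⁻¹ = (t * t)⁻¹ := by
      calc (s * s) * (t * t) * (s * s)⁻¹
          = ((s * s) * t * (s * s)⁻¹) * ((s * s) * t * (s * s)⁻¹) := by group
        _ = t⁻¹ * t⁻¹ := by rw [h1']
        _ = (t * t)⁻¹ := by group
    have ha : (t * t) * (s * s) * (t * t)⁻¹ = (s * s)⁻¹ := by
      calc (t * t) * (s * s) * (t * t)⁻¹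
          = ((t * t) * s * (t * t)⁻¹) * ((t * t) * s * (t * t)⁻¹) := by group
        _ = s⁻¹ * s⁻¹ := by rw [h2']
        _ = (s * s)⁻¹ := by group
    have h4 : (t * t) ^ 4 = 1 := aux_odd hu ha
    calc t ^ 8 = (t * t) ^ 4 := by rw [← pow_two, ← pow_mul]
      _ = 1 := h4
end

section
/- For i ≠ j in I, the commutator [S_j², S_i²] = S_j² S_i² S_j⁻² S_i⁻² in Ŵ equals 1 if A i j is even, and equals S_j⁴ if A i j is odd; in particular this commutator is central in Ŵ. -/
/-! The group `Ŵ` associated to a generalized Cartan matrix `A`. -/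

namespace PaperAmalgams

variable {I : Type*}

lemma conj_rel (A : I → I → ℤ) {i j : I} (hij : i ≠ j) :
    S A i ^ 2 * S A j * (S A i ^ 2)⁻¹ =
      if Even (A i j) then S A j else (S A j)⁻¹ := by
  have hr : (FreeGroup.of i ^ 2 * FreeGroup.of j * (FreeGroup.of i ^ 2)⁻¹ *
      (if Even (A i j) then (FreeGroup.of j)⁻¹ else FreeGroup.of j)) ∈ whatRels A :=
    Or.inr ⟨i, j, hij, rfl⟩
  have h1 : PresentedGroup.mk (whatRels A) (FreeGroup.of i ^ 2 * FreeGroup.of j *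
      (FreeGroup.of i ^ 2)⁻¹ *
      (if Even (A i j) then (FreeGroup.of j)⁻¹ else FreeGroup.of j)) = 1 :=
    (QuotientGroup.eq_one_iff _).2 (Subgroup.subset_normalClosure hr)
  have hi : PresentedGroup.mk (whatRels A) (FreeGroup.of i) = S A i := rfl
  have hj : PresentedGroup.mk (whatRels A) (FreeGroup.of j) = S A j := rfl
  simp only [map_mul, map_pow, map_inv, apply_ite (PresentedGroup.mk (whatRels A)),
    hi, hj] at h1
  by_cases h : Even (A i j)
  · rw [if_pos h] at h1
    rw [if_pos h]
    exact mul_inv_eq_one.1 h1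
  · rw [if_neg h] at h1
    rw [if_neg h]
    exact mul_eq_one_iff_eq_inv.1 h1

/-- `S_j ^ 4` is central. -/
lemma sj4_central (A : I → I → ℤ) (j : I) :
    (S A j ^ 4) ∈ Subgroup.center (What A) := by
  have : ∀ k : I, S A k ∈ Subgroup.centralizer {S A j ^ 4} := by
    intro k
    rw [Subgroup.mem_centralizer_singleton_iff]
    by_cases hk : k = j
    · subst hk; exact ((Commute.refl (S A k)).pow_right 4).eq
    · have h1 := conj_rel A (show j ≠ k from fun h => hk h.symm)
      have key : S A j ^ 4 * S A k * (S A j ^ 4)⁻¹ = S A k := by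
        have h2 : S A j ^ 2 * S A k * (S A j ^ 2)⁻¹ =
            if Even (A j k) then S A k else (S A k)⁻¹ := h1
        have : S A j ^ 4 * S A k * (S A j ^ 4)⁻¹ =
            S A j ^ 2 * (S A j ^ 2 * S A k * (S A j ^ 2)⁻¹) * (S A j ^ 2)⁻¹ := by
          group
        rw [this, h2]
        by_cases h : Even (A j k)
        · rw [if_pos h, h2, if_pos h]
        · rw [if_neg h]
          have : S A j ^ 2 * (S A k)⁻¹ * (S A j ^ 2)⁻¹ =
              (S A j ^ 2 * S A k * (S A j ^ 2)⁻¹)⁻¹ := by group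
          rw [this, h2, if_neg h, inv_inv]
      exact (mul_inv_eq_iff_eq_mul.mp key).symm
  rw [Subgroup.mem_center_iff]
  intro g
  have htop : Subgroup.centralizer {S A j ^ 4} = ⊤ := by
    rw [eq_top_iff, ← PresentedGroup.closure_range_of (whatRels A)]
    exact Subgroup.closure_le _ |>.2 (by rintro _ ⟨k, rfl⟩; exact this k)
  have hg : g ∈ Subgroup.centralizer {S A j ^ 4} := htop ▸ Subgroup.mem_top g
  exact Subgroup.mem_centralizer_singleton_iff.1 hg

end PaperAmalgams

open scoped commutatorElement

open PaperAmalgams in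
/-- For `i ≠ j`, the commutator `[S_j², S_i²] = S_j² S_i² S_j⁻² S_i⁻²` in `Ŵ` equals `1`
if `A i j` is even and equals `S_j⁴` if `A i j` is odd; in particular it is central. -/
theorem what_commutator_of_squares {I : Type*} (A : I → I → ℤ)
    (hA_diag : ∀ i, A i i = 2)
    (hA_off : ∀ i j, i ≠ j → A i j ≤ 0)
    (hA_zero : ∀ i j, A i j = 0 ↔ A j i = 0)
    (i j : I) (hij : i ≠ j) :
    (Even (A i j) → ⁅S A j ^ 2, S A i ^ 2⁆ = 1) ∧
    (Odd (A i j) → ⁅S A j ^ 2, S A i ^ 2⁆ = S A j ^ 4) ∧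
    ⁅S A j ^ 2, S A i ^ 2⁆ ∈ Subgroup.center (What A) := by
  have h := conj_rel A hij
  have heven : Even (A i j) → ⁅S A j ^ 2, S A i ^ 2⁆ = 1 := by
    intro hE
    have h1 : S A i ^ 2 * S A j * (S A i ^ 2)⁻¹ = S A j := by rw [h, if_pos hE]
    have h2 : S A i ^ 2 * (S A j ^ 2)⁻¹ * (S A i ^ 2)⁻¹ = (S A j ^ 2)⁻¹ := by
      have e : S A i ^ 2 * (S A j ^ 2)⁻¹ * (S A i ^ 2)⁻¹ =
          ((S A i ^ 2 * S A j * (S A i ^ 2)⁻¹) *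
            (S A i ^ 2 * S A j * (S A i ^ 2)⁻¹))⁻¹ := by group
      rw [e, h1]; group
    calc ⁅S A j ^ 2, S A i ^ 2⁆
        = S A j ^ 2 * (S A i ^ 2 * (S A j ^ 2)⁻¹ * (S A i ^ 2)⁻¹) := by
          rw [commutatorElement_def]; group
      _ = 1 := by rw [h2]; group
  have hodd : Odd (A i j) → ⁅S A j ^ 2, S A i ^ 2⁆ = S A j ^ 4 := by
    intro hO
    have hE : ¬ Even (A i j) := Int.not_even_iff_odd.2 hO
    have h1 : S A i ^ 2 * S A j * (S A i ^ 2)⁻¹ = (S A j)⁻¹ := by rw [h, if_neg hE]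
    have h2 : S A i ^ 2 * (S A j ^ 2)⁻¹ * (S A i ^ 2)⁻¹ = S A j ^ 2 := by
      have e : S A i ^ 2 * (S A j ^ 2)⁻¹ * (S A i ^ 2)⁻¹ =
          ((S A i ^ 2 * S A j * (S A i ^ 2)⁻¹) *
            (S A i ^ 2 * S A j * (S A i ^ 2)⁻¹))⁻¹ := by group
      rw [e, h1]; group
    calc ⁅S A j ^ 2, S A i ^ 2⁆
        = S A j ^ 2 * (S A i ^ 2 * (S A j ^ 2)⁻¹ * (S A i ^ 2)⁻¹) := by
          rw [commutatorElement_def]; group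
      _ = S A j ^ 4 := by rw [h2]; group
  refine ⟨heven, hodd, ?_⟩
  rcases Int.even_or_odd (A i j) with hE | hO
  · rw [heven hE]; exact Subgroup.one_mem _
  · rw [hodd hO]; exact sj4_central A j
end

section
/- For i ≠ j in I: if both A i j and A j i are odd, then S_i⁴ = S_j⁴ in Ŵ; and if A i j is even while A j i is odd, then S_i⁴ = 1 in Ŵ. -/
/-! The group `Ŵ` associated to a generalized Cartan matrix `A`. -/

namespace PaperAmalgams

variable {I : Type*}

/-- The basic conjugation relation in `Ŵ`. -/
lemma S_sq_conj (A : I → I → ℤ) {i j : I} (hij : i ≠ j) :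
    S A i ^ 2 * S A j * (S A i ^ 2)⁻¹ *
      (if Even (A i j) then (S A j)⁻¹ else S A j) = 1 := by
  have hr : (FreeGroup.of i ^ 2 * FreeGroup.of j * (FreeGroup.of i ^ 2)⁻¹ *
      (if Even (A i j) then (FreeGroup.of j)⁻¹ else FreeGroup.of j)) ∈ whatRels A :=
    Or.inr ⟨i, j, hij, rfl⟩
  have h1 : PresentedGroup.mk (whatRels A)
      (FreeGroup.of i ^ 2 * FreeGroup.of j * (FreeGroup.of i ^ 2)⁻¹ *
        (if Even (A i j) then (FreeGroup.of j)⁻¹ else FreeGroup.of j)) = 1 :=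
    (QuotientGroup.eq_one_iff _).mpr (Subgroup.subset_normalClosure hr)
  rw [map_mul, map_mul, map_inv, map_pow, map_mul, map_pow] at h1
  have hif : PresentedGroup.mk (whatRels A)
      (if Even (A i j) then (FreeGroup.of j)⁻¹ else FreeGroup.of j) =
      (if Even (A i j) then (S A j)⁻¹ else S A j) := by
    split <;> simp [S, PresentedGroup.of]
  rw [hif] at h1
  exact h1

lemma S_sq_conj_even (A : I → I → ℤ) {i j : I} (hij : i ≠ j) (h : Even (A i j)) :
    S A i ^ 2 * S A j = S A j * S A i ^ 2 := by
  have h' := S_sq_conj A hij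
  rw [if_pos h] at h'
  exact mul_inv_eq_iff_eq_mul.mp (mul_inv_eq_one.mp h')

lemma S_sq_conj_odd (A : I → I → ℤ) {i j : I} (hij : i ≠ j) (h : Odd (A i j)) :
    S A i ^ 2 * S A j = (S A j)⁻¹ * S A i ^ 2 := by
  have h' := S_sq_conj A hij
  rw [if_neg (by simpa [Int.not_even_iff_odd] using h)] at h'
  exact mul_inv_eq_iff_eq_mul.mp (mul_eq_one_iff_eq_inv.mp h')

/-- Squared version, odd case: `a² b² = (b²)⁻¹ a²`. -/
lemma sq_conj_sq_odd (A : I → I → ℤ) {i j : I} (hij : i ≠ j) (h : Odd (A i j)) :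
    S A i ^ 2 * S A j ^ 2 = (S A j ^ 2)⁻¹ * S A i ^ 2 := by
  have hb := S_sq_conj_odd A hij h
  set a := S A i
  set b := S A j
  calc a ^ 2 * b ^ 2 = a ^ 2 * (b * b) := by rw [pow_two b]
    _ = (a ^ 2 * b) * b := by rw [mul_assoc]
    _ = (b⁻¹ * a ^ 2) * b := by rw [hb]
    _ = b⁻¹ * (a ^ 2 * b) := by rw [mul_assoc]
    _ = b⁻¹ * (b⁻¹ * a ^ 2) := by rw [hb]
    _ = (b ^ 2)⁻¹ * a ^ 2 := by rw [pow_two b, mul_inv_rev, mul_assoc]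

/-- Squared version, even case: `a² b² = b² a²`. -/
lemma sq_conj_sq_even (A : I → I → ℤ) {i j : I} (hij : i ≠ j) (h : Even (A i j)) :
    S A i ^ 2 * S A j ^ 2 = S A j ^ 2 * S A i ^ 2 := by
  have hb := S_sq_conj_even A hij h
  set a := S A i
  set b := S A j
  calc a ^ 2 * b ^ 2 = a ^ 2 * (b * b) := by rw [pow_two b]
    _ = (a ^ 2 * b) * b := by rw [mul_assoc]
    _ = (b * a ^ 2) * b := by rw [hb]
    _ = b * (a ^ 2 * b) := by rw [mul_assoc]
    _ = b * (b * a ^ 2) := by rw [hb]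
    _ = b ^ 2 * a ^ 2 := by rw [pow_two b, mul_assoc]

end PaperAmalgams

open PaperAmalgams in
/-- For `i ≠ j`: if both `A i j` and `A j i` are odd then `S_i⁴ = S_j⁴` in `Ŵ`;
if `A i j` is even while `A j i` is odd then `S_i⁴ = 1` in `Ŵ`. -/
theorem what_fourth_powers {I : Type*} (A : I → I → ℤ)
    (hA_diag : ∀ i, A i i = 2)
    (hA_off : ∀ i j, i ≠ j → A i j ≤ 0)
    (hA_zero : ∀ i j, A i j = 0 ↔ A j i = 0)
    (i j : I) (hij : i ≠ j) :
    (Odd (A i j) → Odd (A j i) → S A i ^ 4 = S A j ^ 4) ∧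
    (Even (A i j) → Odd (A j i) → S A i ^ 4 = 1) := by
  have hpow : ∀ x : What A, x ^ 4 = x ^ 2 * x ^ 2 := by
    intro x; rw [show (4 : ℕ) = 2 + 2 from rfl, pow_add]
  constructor
  · intro hij' hji'
    have hA : S A i ^ 2 * S A j ^ 2 = (S A j ^ 2)⁻¹ * S A i ^ 2 :=
      sq_conj_sq_odd A hij hij'
    have hB : S A j ^ 2 * S A i ^ 2 = (S A i ^ 2)⁻¹ * S A j ^ 2 :=
      sq_conj_sq_odd A hij.symm hji'
    set X := S A i ^ 2 with hX
    set Y := S A j ^ 2 with hY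
    have e1 : (X * Y) * (X * Y) = Y * Y := by
      calc (X * Y) * (X * Y) = X * ((Y * X) * Y) := by simp only [mul_assoc]
        _ = X * ((X⁻¹ * Y) * Y) := by rw [hB]
        _ = Y * Y := by simp only [mul_assoc, mul_inv_cancel_left]
    have e2 : (X * Y) * (X * Y) = Y⁻¹ * ((X * X) * Y) := by
      nth_rewrite 1 [hA]
      simp only [mul_assoc]
    have key : Y⁻¹ * ((X * X) * Y) = Y * Y := e2.symm.trans e1
    rw [hpow, hpow]
    calc X * X = Y * (Y⁻¹ * ((X * X) * Y)) * Y⁻¹ := by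
          simp only [mul_inv_cancel_left, mul_assoc, mul_inv_cancel, mul_one]
      _ = Y * (Y * Y) * Y⁻¹ := by rw [key]
      _ = Y * Y := by simp only [mul_assoc, mul_inv_cancel, mul_one]
  · intro hij' hji'
    have hA : S A i ^ 2 * S A j ^ 2 = S A j ^ 2 * S A i ^ 2 :=
      sq_conj_sq_even A hij hij'
    have hB : S A j ^ 2 * S A i ^ 2 = (S A i ^ 2)⁻¹ * S A j ^ 2 :=
      sq_conj_sq_odd A hij.symm hji'
    set X := S A i ^ 2 with hX
    set Y := S A j ^ 2 with hY
    have key : X * Y = X⁻¹ * Y := hA.trans hB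
    have e : (X * X) * Y = 1 * Y := by
      calc (X * X) * Y = X * (X * Y) := by rw [mul_assoc]
        _ = X * (X⁻¹ * Y) := by rw [key]
        _ = 1 * Y := by simp only [mul_inv_cancel_left, one_mul]
    rw [hpow]
    exact mul_right_cancel e
end

section
/- The natural homomorphism from the amalgamated free product (U ∞ ⋊ H_∞) ∗_{H_∞} H (amalgamated along the inclusions of H_∞ into the two factors) to the semidirect product K ⋊_φ H — induced by the evident inclusion of U ∞ ⋊ H_∞ into K ⋊_φ H and the inclusion of H into K ⋊_φ H — is an isomorphism of groups. -/
/-! If a group `H` acts transitively on a nonempty set `Φ`, acts by automorphisms on the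
free product `K = ∗_{α ∈ Φ} U α` permuting the factors accordingly, then
`K ⋊ H ≅ (U ∞ ⋊ H_∞) ∗_{H_∞} H`. -/

namespace PaperAmalgams

universe u v

variable {H : Type u} [Group H] {Φ : Type v} [MulAction H Φ]
  (U : Φ → Type u) [∀ α, Group (U α)]
  (φ : H →* MulAut (Monoid.CoprodI U)) (pt : Φ)
  (ψ : ↥(MulAction.stabilizer H pt) →* MulAut (U pt))

/-- The two factors of the amalgam: `U ∞ ⋊ H_∞` (at `true`) and `H` (at `false`). -/
def Fam : Bool → Type u
  | true => U pt ⋊[ψ] ↥(MulAction.stabilizer H pt)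
  | false => H

instance : ∀ b, Group (Fam U pt ψ b)
  | true => inferInstanceAs (Group (_ ⋊[_] _))
  | false => inferInstanceAs (Group H)

/-- The inclusions of `H_∞` into the two factors. -/
def baseMaps : ∀ b, ↥(MulAction.stabilizer H pt) →* Fam U pt ψ b
  | true => SemidirectProduct.inr
  | false => (MulAction.stabilizer H pt).subtype

/-- The amalgamated free product `(U ∞ ⋊ H_∞) ∗_{H_∞} H`, realized as the pushout of the
two inclusions of `H_∞`. -/
abbrev Amalgam : Type _ := Monoid.PushoutI (baseMaps U pt ψ)

/-- Compatibility of the restricted action `ψ` with conjugation in `K ⋊ H`. -/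
theorem factor_compat
    (hψ : ∀ (h : MulAction.stabilizer H pt) (u : U pt),
      φ h (Monoid.CoprodI.of u) = Monoid.CoprodI.of (ψ h u))
    (g : ↥(MulAction.stabilizer H pt)) :
    ((SemidirectProduct.inl : Monoid.CoprodI U →* Monoid.CoprodI U ⋊[φ] H).comp
        (Monoid.CoprodI.of (i := pt))).comp (MulEquiv.toMonoidHom (ψ g)) =
      (MulEquiv.toMonoidHom
          (MulAut.conj
            (((SemidirectProduct.inr : H →* Monoid.CoprodI U ⋊[φ] H).comp
              (MulAction.stabilizer H pt).subtype) g))).comp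
        ((SemidirectProduct.inl : Monoid.CoprodI U →* Monoid.CoprodI U ⋊[φ] H).comp
          (Monoid.CoprodI.of (i := pt))) := by
  refine MonoidHom.ext fun u => ?_
  show SemidirectProduct.inl (Monoid.CoprodI.of ((ψ g) u)) =
    MulAut.conj (SemidirectProduct.inr (φ := φ) (g : H))
      (SemidirectProduct.inl (Monoid.CoprodI.of u))
  rw [MulAut.conj_apply, ← map_inv, ← SemidirectProduct.inl_aut, hψ]

/-- The evident homomorphisms from the two factors to `K ⋊ H`. -/
def factorMaps
    (hψ : ∀ (h : MulAction.stabilizer H pt) (u : U pt),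
      φ h (Monoid.CoprodI.of u) = Monoid.CoprodI.of (ψ h u)) :
    ∀ b, Fam U pt ψ b →* Monoid.CoprodI U ⋊[φ] H
  | true =>
    SemidirectProduct.lift
      (SemidirectProduct.inl.comp Monoid.CoprodI.of)
      (SemidirectProduct.inr.comp (MulAction.stabilizer H pt).subtype)
      (factor_compat U φ pt ψ hψ)
  | false => SemidirectProduct.inr

/-- The natural homomorphism `(U ∞ ⋊ H_∞) ∗_{H_∞} H → K ⋊ H`, induced by the evident
inclusion of `U ∞ ⋊ H_∞` and the inclusion of `H`. -/
def naturalHom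
    (hψ : ∀ (h : MulAction.stabilizer H pt) (u : U pt),
      φ h (Monoid.CoprodI.of u) = Monoid.CoprodI.of (ψ h u)) :
    Amalgam U pt ψ →* Monoid.CoprodI U ⋊[φ] H :=
  Monoid.PushoutI.lift (factorMaps U φ pt ψ hψ)
    (SemidirectProduct.inr.comp (MulAction.stabilizer H pt).subtype)
    (by
      intro b
      cases b
      · rfl
      · exact SemidirectProduct.lift_comp_inr _ _ (factor_compat U φ pt ψ hψ))

end PaperAmalgams

namespace PaperAmalgams

section Aux

open Monoid

universe u' v'

variable {H : Type u'} [Group H] {Φ : Type v'} [MulAction H Φ]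
  [MulAction.IsPretransitive H Φ]
  {U : Φ → Type u'} [∀ α, Group (U α)]
  {φ : H →* MulAut (Monoid.CoprodI U)} {pt : Φ}
  {ψ : ↥(MulAction.stabilizer H pt) →* MulAut (U pt)}

variable (H pt) in
/-- A section of the transitive action: `sec α • pt = α`. -/
noncomputable def sec (α : Φ) : H := (MulAction.exists_smul_eq H pt α).choose

theorem sec_spec (α : Φ) : sec H pt α • pt = α :=
  (MulAction.exists_smul_eq H pt α).choose_spec

variable (hφ : ∀ (h : H) (α : Φ),
      Subgroup.map (φ h).toMonoidHom
          (MonoidHom.range (Monoid.CoprodI.of : U α →* Monoid.CoprodI U)) =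
        MonoidHom.range (Monoid.CoprodI.of : U (h • α) →* Monoid.CoprodI U))
  (hψ : ∀ (h : MulAction.stabilizer H pt) (u : U pt),
      φ h (Monoid.CoprodI.of u) = Monoid.CoprodI.of (ψ h u))

variable (pt) in
include hφ in
theorem exists_pull (α : Φ) (u : U α) :
    ∃ v : U pt, φ (sec H pt α) (Monoid.CoprodI.of v) = Monoid.CoprodI.of u := by
  have h1 := hφ (sec H pt α) pt
  rw [sec_spec] at h1
  have hmem : (Monoid.CoprodI.of u : Monoid.CoprodI U) ∈
      Subgroup.map (φ (sec H pt α)).toMonoidHom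
        (MonoidHom.range (Monoid.CoprodI.of : U pt →* Monoid.CoprodI U)) := by
    rw [h1]; exact ⟨u, rfl⟩
  obtain ⟨k, ⟨v, rfl⟩, hk⟩ := hmem
  exact ⟨v, hk⟩

variable (pt) in
/-- Pull an element of `U α` back to `U pt` along `φ (sec H pt α)`. -/
noncomputable def pullU (α : Φ) (u : U α) : U pt := (exists_pull pt hφ α u).choose

variable (pt) in
theorem pullU_spec (α : Φ) (u : U α) :
    φ (sec H pt α) (Monoid.CoprodI.of (pullU pt hφ α u)) = Monoid.CoprodI.of u :=
  (exists_pull pt hφ α u).choose_spec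

variable (pt) in
theorem pullU_eq (α : Φ) (u : U α) (v : U pt)
    (hv : φ (sec H pt α) (Monoid.CoprodI.of v) = Monoid.CoprodI.of u) :
    pullU pt hφ α u = v := by
  have := (pullU_spec pt hφ α u).trans hv.symm
  exact Monoid.CoprodI.of_injective pt ((φ (sec H pt α)).injective this)

variable (ψ) in
/-- The copy of `H` inside the amalgam. -/
def cH : H →* Amalgam U pt ψ := Monoid.PushoutI.of (φ := baseMaps U pt ψ) false

variable (ψ) in
/-- The copy of `U pt` inside the amalgam. -/
def jU : U pt →* Amalgam U pt ψ :=
  (Monoid.PushoutI.of true).comp (SemidirectProduct.inl (φ := ψ))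

theorem cH_stab (g : ↥(MulAction.stabilizer H pt)) :
    cH ψ (g : H) =
      Monoid.PushoutI.of (φ := baseMaps U pt ψ) true (SemidirectProduct.inr g) := by
  have h1 := Monoid.PushoutI.of_apply_eq_base (baseMaps U pt ψ) false g
  have h2 := Monoid.PushoutI.of_apply_eq_base (baseMaps U pt ψ) true g
  exact h1.trans h2.symm

theorem cH_conj_jU (g : ↥(MulAction.stabilizer H pt)) (x : U pt) :
    cH ψ (g : H) * jU ψ x * (cH ψ (g : H))⁻¹ =
      jU ψ (ψ g x) := by
  have key : (SemidirectProduct.inr g : U pt ⋊[ψ] ↥(MulAction.stabilizer H pt)) *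
      SemidirectProduct.inl x * (SemidirectProduct.inr g)⁻¹ =
      SemidirectProduct.inl (ψ g x) := by
    rw [← map_inv, ← SemidirectProduct.inl_aut]
  rw [cH_stab]
  let f : (U pt ⋊[ψ] ↥(MulAction.stabilizer H pt)) →* Amalgam U pt ψ :=
    Monoid.PushoutI.of (φ := baseMaps U pt ψ) true
  have key' := congrArg f key
  rw [map_mul, map_mul, map_inv] at key'
  exact key'

/-- The factor maps `U α → Amalgam`, conjugating by `sec H pt α`. -/
noncomputable def fFac (α : Φ) : U α →* Amalgam U pt ψ :=
  MonoidHom.mk' (fun u => cH ψ (sec H pt α) * jU ψ (pullU pt hφ α u) *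
      (cH ψ (sec H pt α))⁻¹) (by
    intro a b
    have hab : pullU pt hφ α (a * b) = pullU pt hφ α a * pullU pt hφ α b := by
      refine pullU_eq pt hφ α (a * b) _ ?_
      rw [map_mul, map_mul, pullU_spec pt hφ, pullU_spec pt hφ, map_mul]
    rw [hab, map_mul]
    group)

/-- The induced map `K → Amalgam`. -/
noncomputable def fK : Monoid.CoprodI U →* Amalgam U pt ψ :=
  Monoid.CoprodI.lift (fFac hφ)

theorem fK_of (α : Φ) (u : U α) :
    fK hφ (Monoid.CoprodI.of u) = cH ψ (sec H pt α) *
      jU ψ (pullU pt hφ α u) * (cH ψ (sec H pt α))⁻¹ :=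
  Monoid.CoprodI.lift_of _ _

include hψ in
theorem fK_apply (h : H) (x : U pt) :
    fK hφ (φ h (Monoid.CoprodI.of x)) =
      cH ψ h * jU ψ x * (cH ψ h)⁻¹ := by
  set α : Φ := h • pt with hα
  have hg : (sec H pt α)⁻¹ * h ∈ MulAction.stabilizer H pt := by
    rw [MulAction.mem_stabilizer_iff, mul_smul, ← hα]
    exact inv_smul_eq_iff.mpr (sec_spec α).symm
  set g : ↥(MulAction.stabilizer H pt) := ⟨(sec H pt α)⁻¹ * h, hg⟩ with hgdef
  have hh : h = sec H pt α * (g : H) := by simp [hgdef]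
  have step1 : φ h (Monoid.CoprodI.of x) =
      φ (sec H pt α) (Monoid.CoprodI.of (ψ g x)) := by
    rw [hh, map_mul]
    exact congrArg (φ (sec H pt α)) (hψ g x)
  obtain ⟨u, hu⟩ : ∃ u : U α, Monoid.CoprodI.of u =
      φ (sec H pt α) (Monoid.CoprodI.of (ψ g x)) := by
    have h1 := hφ (sec H pt α) pt
    rw [sec_spec] at h1
    have : φ (sec H pt α) (Monoid.CoprodI.of (ψ g x)) ∈
        Subgroup.map (φ (sec H pt α)).toMonoidHom
          (MonoidHom.range (Monoid.CoprodI.of : U pt →* Monoid.CoprodI U)) :=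
      ⟨Monoid.CoprodI.of (ψ g x), ⟨ψ g x, rfl⟩, rfl⟩
    rw [h1] at this
    obtain ⟨u, hu⟩ := this
    exact ⟨u, hu⟩
  have hpull : pullU pt hφ α u = ψ g x := pullU_eq pt hφ α u _ hu.symm
  have hch : cH ψ (sec H pt α) * cH ψ (g : H) = cH ψ h := by
    rw [← map_mul]; exact congrArg _ hh.symm
  rw [step1, ← hu, fK_of, hpull, ← cH_conj_jU g x, ← hch]
  group

include hψ in
theorem fK_compat (h : H) :
    (fK (φ := φ) (ψ := ψ) hφ).comp (φ h).toMonoidHom =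
      (MulAut.conj (cH ψ h)).toMonoidHom.comp (fK hφ) := by
  refine Monoid.CoprodI.ext_hom _ _ fun α => MonoidHom.ext fun u => ?_
  simp only [MonoidHom.comp_apply, MulEquiv.toMonoidHom_eq_coe, MonoidHom.coe_coe,
    MulAut.conj_apply]
  have hu : (Monoid.CoprodI.of u : Monoid.CoprodI U) =
      φ (sec H pt α) (Monoid.CoprodI.of (pullU pt hφ α u)) := (pullU_spec pt hφ α u).symm
  calc (fK hφ) ((φ h) (Monoid.CoprodI.of u))
      = (fK hφ) (φ (h * sec H pt α) (Monoid.CoprodI.of (pullU pt hφ α u))) := by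
        rw [hu, map_mul]; rfl
    _ = cH ψ (h * sec H pt α) * jU ψ (pullU pt hφ α u) *
          (cH ψ (h * sec H pt α))⁻¹ := fK_apply hφ hψ _ _
    _ = cH ψ h * ((fK hφ) (Monoid.CoprodI.of u)) *
          (cH ψ h)⁻¹ := by
        rw [hu, fK_apply hφ hψ, map_mul]
        group

/-- The inverse homomorphism `K ⋊ H → Amalgam`. -/
noncomputable def invHom : (Monoid.CoprodI U ⋊[φ] H) →* Amalgam U pt ψ :=
  SemidirectProduct.lift (fK hφ) (cH ψ) (fK_compat hφ hψ)

include hψ in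
theorem naturalHom_of (b : Bool) (x : Fam U pt ψ b) :
    naturalHom U φ pt ψ hψ (Monoid.PushoutI.of b x) = factorMaps U φ pt ψ hψ b x := by
  rw [naturalHom, Monoid.PushoutI.lift_of]

theorem naturalHom_cH (h : H) :
    naturalHom U φ pt ψ hψ (cH ψ h) = SemidirectProduct.inr h :=
  naturalHom_of hψ false h

theorem naturalHom_jU (x : U pt) :
    naturalHom U φ pt ψ hψ (jU ψ x) = SemidirectProduct.inl (Monoid.CoprodI.of x) :=
  (naturalHom_of hψ true (SemidirectProduct.inl x)).trans
    (SemidirectProduct.lift_inl _ _ (factor_compat U φ pt ψ hψ) x)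

theorem naturalHom_base (g : ↥(MulAction.stabilizer H pt)) :
    naturalHom U φ pt ψ hψ
        (Monoid.PushoutI.of (φ := baseMaps U pt ψ) true (SemidirectProduct.inr g)) =
      SemidirectProduct.inr (φ := φ) (g : H) :=
  (naturalHom_of hψ true (SemidirectProduct.inr g)).trans
    (SemidirectProduct.lift_inr _ _ (factor_compat U φ pt ψ hψ) g)

theorem right_inv :
    (naturalHom U φ pt ψ hψ).comp (invHom hφ hψ) = MonoidHom.id _ := by
  refine SemidirectProduct.hom_ext ?_ ?_
  · refine Monoid.CoprodI.ext_hom _ _ fun α => MonoidHom.ext fun u => ?_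
    show naturalHom U φ pt ψ hψ (invHom hφ hψ (SemidirectProduct.inl (Monoid.CoprodI.of u)))
      = SemidirectProduct.inl (Monoid.CoprodI.of u)
    rw [invHom, SemidirectProduct.lift_inl, fK_of, map_mul, map_mul, map_inv,
      naturalHom_cH hψ, naturalHom_jU hψ, ← map_inv, ← SemidirectProduct.inl_aut,
      pullU_spec pt hφ]
  · refine MonoidHom.ext fun h => ?_
    show naturalHom U φ pt ψ hψ (invHom hφ hψ (SemidirectProduct.inr h)) =
      SemidirectProduct.inr h
    rw [invHom, SemidirectProduct.lift_inr]
    exact naturalHom_cH hψ h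

theorem left_inv :
    (invHom (φ := φ) (ψ := ψ) hφ hψ).comp (naturalHom U φ pt ψ hψ) = MonoidHom.id _ := by
  refine Monoid.PushoutI.hom_ext_nonempty fun b => ?_
  cases b
  · refine MonoidHom.ext fun h => ?_
    show invHom hφ hψ (naturalHom U φ pt ψ hψ
        (Monoid.PushoutI.of (φ := baseMaps U pt ψ) false h)) =
      Monoid.PushoutI.of (φ := baseMaps U pt ψ) false h
    calc invHom hφ hψ (naturalHom U φ pt ψ hψ
            (Monoid.PushoutI.of (φ := baseMaps U pt ψ) false h))
        = invHom hφ hψ (SemidirectProduct.inr h) := congrArg _ (naturalHom_cH hψ h)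
      _ = cH ψ h := SemidirectProduct.lift_inr _ _ _ h
  · refine SemidirectProduct.hom_ext ?_ ?_
    · refine MonoidHom.ext fun v => ?_
      show invHom hφ hψ (naturalHom U φ pt ψ hψ
          (Monoid.PushoutI.of (φ := baseMaps U pt ψ) true (SemidirectProduct.inl v))) =
        Monoid.PushoutI.of (φ := baseMaps U pt ψ) true (SemidirectProduct.inl v)
      have h2 := fK_apply (ψ := ψ) hφ hψ 1 v
      simp only [map_one, MulAut.one_apply, inv_one, one_mul, mul_one] at h2
      calc invHom hφ hψ (naturalHom U φ pt ψ hψ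
              (Monoid.PushoutI.of (φ := baseMaps U pt ψ) true (SemidirectProduct.inl v)))
          = invHom hφ hψ (SemidirectProduct.inl (Monoid.CoprodI.of v)) :=
            congrArg _ (naturalHom_jU hψ v)
        _ = fK hφ (Monoid.CoprodI.of v) := SemidirectProduct.lift_inl _ _ _ _
        _ = jU ψ v := h2
    · refine MonoidHom.ext fun g => ?_
      show invHom hφ hψ (naturalHom U φ pt ψ hψ
          (Monoid.PushoutI.of (φ := baseMaps U pt ψ) true (SemidirectProduct.inr g))) =
        Monoid.PushoutI.of (φ := baseMaps U pt ψ) true (SemidirectProduct.inr g)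
      calc invHom hφ hψ (naturalHom U φ pt ψ hψ
              (Monoid.PushoutI.of (φ := baseMaps U pt ψ) true (SemidirectProduct.inr g)))
          = invHom hφ hψ (SemidirectProduct.inr (g : H)) :=
            congrArg _ (naturalHom_base hψ g)
        _ = cH ψ (g : H) := SemidirectProduct.lift_inr _ _ _ _
        _ = Monoid.PushoutI.of (φ := baseMaps U pt ψ) true (SemidirectProduct.inr g) :=
            cH_stab g

end Aux

end PaperAmalgams

open PaperAmalgams in
/-- Let `H` act transitively on a nonempty set `Φ`, let `K = ∗_{α ∈ Φ} U α` be the free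
product of a family of groups, and let `φ : H →* MulAut K` permute the factors compatibly
with the action of `H` on `Φ`.  Fix `∞ ∈ Φ`, let `H_∞` be its stabilizer, and let
`ψ : H_∞ →* MulAut (U ∞)` be the restriction of `φ` to `U ∞`.  Then the natural
homomorphism `(U ∞ ⋊ H_∞) ∗_{H_∞} H → K ⋊_φ H` is an isomorphism. -/
theorem amalgam_natural_hom_bijective {H : Type u} [Group H] {Φ : Type v}
    [MulAction H Φ] [Nonempty Φ] [MulAction.IsPretransitive H Φ]
    (U : Φ → Type u) [∀ α, Group (U α)]
    (φ : H →* MulAut (Monoid.CoprodI U))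
    (hφ : ∀ (h : H) (α : Φ),
      Subgroup.map (φ h).toMonoidHom
          (MonoidHom.range (Monoid.CoprodI.of : U α →* Monoid.CoprodI U)) =
        MonoidHom.range (Monoid.CoprodI.of : U (h • α) →* Monoid.CoprodI U))
    (pt : Φ) (ψ : ↥(MulAction.stabilizer H pt) →* MulAut (U pt))
    (hψ : ∀ (h : MulAction.stabilizer H pt) (u : U pt),
      φ h (Monoid.CoprodI.of u) = Monoid.CoprodI.of (ψ h u)) :
    Function.Bijective (naturalHom U φ pt ψ hψ) := by
  refine Function.bijective_iff_has_inverse.mpr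
    ⟨invHom hφ hψ, fun x => ?_, fun x => ?_⟩
  · exact DFunLike.congr_fun (left_inv hφ hψ) x
  · exact DFunLike.congr_fun (right_inv hφ hψ) x
end

section
/- There is a group endomorphism φ of St_{B₂}(R) satisfying φ(S) = S′, φ(S′) = S, φ(X(t)) = X′(t²) and φ(X′(t)) = X(t) for all t ∈ R. -/
/-! The exceptional diagram endomorphism of the Steinberg group of type `B₂` in
characteristic `2`. -/

namespace PaperAmalgams

/-- Generators of the Steinberg group of type `B₂`: `S`, `S′` and the `X(t)`, `X′(t)`. -/
inductive B2Gen (R : Type*)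
  | S : B2Gen R
  | S' : B2Gen R
  | X : R → B2Gen R
  | X' : R → B2Gen R

open scoped commutatorElement in
/-- The defining relators of `St_{B₂}(R)` (in its simplified form, valid when `2 = 0` in
`R`): for all `t, u ∈ R`,
`S S′ S S′ = S′ S S′ S`;
`X(t) X(u) = X(t+u)` (& primed);
`S S′ S ⇄ X′(t)` (& primed);
`S X′(t) S⁻¹ ⇄ S′ X(u) S′⁻¹`;
`X′(t) ⇄ S X′(u) S⁻¹` (& primed);
`[X(t), X′(u)] = S′ X(−t u) S′⁻¹ ⬝ S X′(t² u) S⁻¹`;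
`S = X(1) S X(1) S⁻¹ X(1)` (& primed). -/
def b2Rels (R : Type*) [CommRing R] : Set (FreeGroup (B2Gen R)) :=
  let S : FreeGroup (B2Gen R) := .of .S
  let S' : FreeGroup (B2Gen R) := .of .S'
  let X : R → FreeGroup (B2Gen R) := fun t => .of (.X t)
  let X' : R → FreeGroup (B2Gen R) := fun t => .of (.X' t)
  {S * S' * S * S' * (S' * S * S' * S)⁻¹} ∪
  (⋃ (t : R) (u : R),
    {X t * X u * (X (t + u))⁻¹,
     X' t * X' u * (X' (t + u))⁻¹,
     ⁅S * X' t * S⁻¹, S' * X u * S'⁻¹⁆,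
     ⁅X' t, S * X' u * S⁻¹⁆,
     ⁅X t, S' * X u * S'⁻¹⁆,
     (X t * X' u * (X t)⁻¹ * (X' u)⁻¹) *
       (S' * X (-(t * u)) * S'⁻¹ * (S * X' (t ^ 2 * u) * S⁻¹))⁻¹}) ∪
  (⋃ (t : R),
    {⁅S * S' * S, X' t⁆,
     ⁅S' * S * S', X t⁆}) ∪
  {S * (X 1 * S * X 1 * S⁻¹ * X 1)⁻¹,
   S' * (X' 1 * S' * X' 1 * S'⁻¹ * X' 1)⁻¹}

/-- The Steinberg group `St_{B₂}(R)` (presented form, for rings with `2 = 0`). -/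
abbrev StB2 (R : Type*) [CommRing R] : Type _ := PresentedGroup (b2Rels R)

/-- The images of the generators in `St_{B₂}(R)`. -/
def StB2.gen {R : Type*} [CommRing R] (g : B2Gen R) : StB2 R := PresentedGroup.of g

end PaperAmalgams

namespace PaperAmalgams

namespace B2Aux

variable {R : Type*} [CommRing R]

def s : StB2 R := StB2.gen .S
def s' : StB2 R := StB2.gen .S'
def x (t : R) : StB2 R := StB2.gen (.X t)
def x' (t : R) : StB2 R := StB2.gen (.X' t)

lemma mk_S : PresentedGroup.mk (b2Rels R) (FreeGroup.of B2Gen.S) = s := rfl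
lemma mk_S' : PresentedGroup.mk (b2Rels R) (FreeGroup.of B2Gen.S') = s' := rfl
lemma mk_X (t : R) : PresentedGroup.mk (b2Rels R) (FreeGroup.of (B2Gen.X t)) = x t := rfl
lemma mk_X' (t : R) : PresentedGroup.mk (b2Rels R) (FreeGroup.of (B2Gen.X' t)) = x' t := rfl

lemma mk_rel {r : FreeGroup (B2Gen R)} (hr : r ∈ b2Rels R) :
    PresentedGroup.mk (b2Rels R) r = 1 :=
  (QuotientGroup.eq_one_iff r).mpr (Subgroup.subset_normalClosure hr)

-- membership helpers
section mem
variable (t u : R)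

lemma memA :
    (FreeGroup.of B2Gen.S * FreeGroup.of B2Gen.S' * FreeGroup.of B2Gen.S * FreeGroup.of B2Gen.S' *
      (FreeGroup.of B2Gen.S' * FreeGroup.of B2Gen.S * FreeGroup.of B2Gen.S' *
        FreeGroup.of (B2Gen.S (R := R)))⁻¹) ∈ b2Rels R :=
  Set.mem_union_left _ (Set.mem_union_left _ (Set.mem_union_left _ rfl))

open scoped commutatorElement in
lemma memB {w : FreeGroup (B2Gen R)}
    (h : w ∈ ({FreeGroup.of (B2Gen.X t) * FreeGroup.of (B2Gen.X u) *
        (FreeGroup.of (B2Gen.X (t + u)))⁻¹,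
     FreeGroup.of (B2Gen.X' t) * FreeGroup.of (B2Gen.X' u) *
        (FreeGroup.of (B2Gen.X' (t + u)))⁻¹,
     ⁅FreeGroup.of B2Gen.S * FreeGroup.of (B2Gen.X' t) * (FreeGroup.of B2Gen.S)⁻¹,
       FreeGroup.of B2Gen.S' * FreeGroup.of (B2Gen.X u) * (FreeGroup.of B2Gen.S')⁻¹⁆,
     ⁅FreeGroup.of (B2Gen.X' t),
       FreeGroup.of B2Gen.S * FreeGroup.of (B2Gen.X' u) * (FreeGroup.of B2Gen.S)⁻¹⁆,
     ⁅FreeGroup.of (B2Gen.X t),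
       FreeGroup.of B2Gen.S' * FreeGroup.of (B2Gen.X u) * (FreeGroup.of B2Gen.S')⁻¹⁆,
     (FreeGroup.of (B2Gen.X t) * FreeGroup.of (B2Gen.X' u) * (FreeGroup.of (B2Gen.X t))⁻¹ *
        (FreeGroup.of (B2Gen.X' u))⁻¹) *
       (FreeGroup.of B2Gen.S' * FreeGroup.of (B2Gen.X (-(t * u))) * (FreeGroup.of B2Gen.S')⁻¹ *
         (FreeGroup.of B2Gen.S * FreeGroup.of (B2Gen.X' (t ^ 2 * u)) *
           (FreeGroup.of B2Gen.S)⁻¹))⁻¹} : Set (FreeGroup (B2Gen R)))) :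
    w ∈ b2Rels R :=
  Set.mem_union_left _ (Set.mem_union_left _ (Set.mem_union_right _
    (Set.mem_iUnion.2 ⟨t, Set.mem_iUnion.2 ⟨u, h⟩⟩)))

open scoped commutatorElement in
lemma memC {w : FreeGroup (B2Gen R)}
    (h : w ∈ ({⁅FreeGroup.of (B2Gen.S (R := R)) * FreeGroup.of B2Gen.S' * FreeGroup.of B2Gen.S,
        FreeGroup.of (B2Gen.X' t)⁆,
      ⁅FreeGroup.of (B2Gen.S' (R := R)) * FreeGroup.of B2Gen.S * FreeGroup.of B2Gen.S',
        FreeGroup.of (B2Gen.X t)⁆} : Set (FreeGroup (B2Gen R)))) :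
    w ∈ b2Rels R :=
  Set.mem_union_left _ (Set.mem_union_right _ (Set.mem_iUnion.2 ⟨t, h⟩))

lemma memD {w : FreeGroup (B2Gen R)}
    (h : w ∈ ({FreeGroup.of B2Gen.S *
        (FreeGroup.of (B2Gen.X 1) * FreeGroup.of B2Gen.S * FreeGroup.of (B2Gen.X 1) *
          (FreeGroup.of B2Gen.S)⁻¹ * FreeGroup.of (B2Gen.X 1))⁻¹,
      FreeGroup.of B2Gen.S' *
        (FreeGroup.of (B2Gen.X' 1) * FreeGroup.of B2Gen.S' * FreeGroup.of (B2Gen.X' 1) *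
          (FreeGroup.of B2Gen.S')⁻¹ *
            FreeGroup.of (B2Gen.X' (1 : R)))⁻¹} : Set (FreeGroup (B2Gen R)))) :
    w ∈ b2Rels R :=
  Set.mem_union_right _ h

end mem

-- the relations in StB2
section rels
variable (t u : R)

lemma rel_braid : s * s' * s * s' = s' * s * s' * (s : StB2 R) := by
  have h := mk_rel (memA (R := R))
  simp only [map_mul, map_inv, mk_S, mk_S'] at h
  rwa [mul_inv_eq_one] at h

lemma rel_x_add : x t * x u = x (t + u) := by
  have h := mk_rel (memB t u (Set.mem_insert _ _))
  simp only [map_mul, map_inv, mk_X] at h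
  rwa [mul_inv_eq_one] at h

lemma rel_x'_add : x' t * x' u = x' (t + u) := by
  have h := mk_rel (memB t u (Set.mem_insert_of_mem _ (Set.mem_insert _ _)))
  simp only [map_mul, map_inv, mk_X'] at h
  rwa [mul_inv_eq_one] at h

lemma rel3 : Commute (s * x' t * s⁻¹) (s' * x u * s'⁻¹ : StB2 R) := by
  have h := mk_rel (memB t u (Set.mem_insert_of_mem _ (Set.mem_insert_of_mem _
    (Set.mem_insert _ _))))
  simp only [map_commutatorElement, map_mul, map_inv, mk_S, mk_S', mk_X, mk_X'] at h
  rwa [commutatorElement_eq_one_iff_commute] at h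

lemma rel4 : Commute (x' t) (s * x' u * s⁻¹ : StB2 R) := by
  have h := mk_rel (memB t u (Set.mem_insert_of_mem _ (Set.mem_insert_of_mem _
    (Set.mem_insert_of_mem _ (Set.mem_insert _ _)))))
  simp only [map_commutatorElement, map_mul, map_inv, mk_S, mk_X'] at h
  rwa [commutatorElement_eq_one_iff_commute] at h

lemma rel5 : Commute (x t) (s' * x u * s'⁻¹ : StB2 R) := by
  have h := mk_rel (memB t u (Set.mem_insert_of_mem _ (Set.mem_insert_of_mem _
    (Set.mem_insert_of_mem _ (Set.mem_insert_of_mem _ (Set.mem_insert _ _))))))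
  simp only [map_commutatorElement, map_mul, map_inv, mk_S', mk_X] at h
  rwa [commutatorElement_eq_one_iff_commute] at h

lemma rel6 : x t * x' u * (x t)⁻¹ * (x' u)⁻¹ =
    s' * x (-(t * u)) * s'⁻¹ * (s * x' (t ^ 2 * u) * s⁻¹ : StB2 R) := by
  have h := mk_rel (memB t u (Set.mem_insert_of_mem _ (Set.mem_insert_of_mem _
    (Set.mem_insert_of_mem _ (Set.mem_insert_of_mem _ (Set.mem_insert_of_mem _ rfl))))))
  simp only [map_mul, map_inv, mk_S, mk_S', mk_X, mk_X'] at h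
  rwa [mul_inv_eq_one] at h

lemma rel7 : Commute (s * s' * s) (x' t : StB2 R) := by
  have h := mk_rel (memC t (Set.mem_insert _ _))
  simp only [map_commutatorElement, map_mul, mk_S, mk_S', mk_X'] at h
  rwa [commutatorElement_eq_one_iff_commute] at h

lemma rel7' : Commute (s' * s * s') (x t : StB2 R) := by
  have h := mk_rel (memC t (Set.mem_insert_of_mem _ rfl))
  simp only [map_commutatorElement, map_mul, mk_S, mk_S', mk_X] at h
  rwa [commutatorElement_eq_one_iff_commute] at h

lemma rel8 : (s : StB2 R) = x 1 * s * x 1 * s⁻¹ * x 1 := by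
  have h := mk_rel (memD (R := R) (Set.mem_insert _ _))
  simp only [map_mul, map_inv, mk_S, mk_X] at h
  rwa [mul_inv_eq_one] at h

lemma rel8' : (s' : StB2 R) = x' 1 * s' * x' 1 * s'⁻¹ * x' 1 := by
  have h := mk_rel (memD (R := R) (Set.mem_insert_of_mem _ rfl))
  simp only [map_mul, map_inv, mk_S', mk_X'] at h
  rwa [mul_inv_eq_one] at h

lemma x_zero : x (0 : R) = 1 := by
  have h := rel_x_add (0 : R) 0
  rw [add_zero] at h
  exact mul_left_cancel (a := x (0 : R)) (by rw [h, mul_one])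

lemma x'_zero : x' (0 : R) = 1 := by
  have h := rel_x'_add (0 : R) 0
  rw [add_zero] at h
  exact mul_left_cancel (a := x' (0 : R)) (by rw [h, mul_one])

lemma x_inv (t : R) : (x t)⁻¹ = x (-t) := by
  have e : t + -t = 0 := by ring
  exact inv_eq_of_mul_eq_one_right (by rw [rel_x_add, e, x_zero])

lemma x'_inv (t : R) : (x' t)⁻¹ = x' (-t) := by
  have e : t + -t = 0 := by ring
  exact inv_eq_of_mul_eq_one_right (by rw [rel_x'_add, e, x'_zero])

end rels

def fmap : B2Gen R → StB2 R
  | .S => s'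
  | .S' => s
  | .X t => x' (t ^ 2)
  | .X' t => x t

@[simp] lemma fmap_S : fmap (B2Gen.S (R := R)) = s' := rfl
@[simp] lemma fmap_S' : fmap (B2Gen.S' (R := R)) = s := rfl
@[simp] lemma fmap_X (t : R) : fmap (B2Gen.X t) = x' (t ^ 2) := rfl
@[simp] lemma fmap_X' (t : R) : fmap (B2Gen.X' t) = x t := rfl

end B2Aux

namespace B2Aux

variable {R : Type*} [CommRing R]

lemma lift_ok (h2 : (2 : R) = 0) :
    ∀ r ∈ b2Rels R, FreeGroup.lift (fmap (R := R)) r = 1 := by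
  have neg_id : ∀ a : R, -a = a := fun a =>
    neg_eq_of_add_eq_zero_left (by rw [← two_mul, h2, zero_mul])
  have sq_add : ∀ a b : R, (a + b) ^ 2 = a ^ 2 + b ^ 2 := by
    intro a b
    have e : (a + b) ^ 2 = a ^ 2 + b ^ 2 + 2 * (a * b) := by ring
    rw [e, h2, zero_mul, add_zero]
  intro r hr
  simp only [b2Rels, Set.mem_union, Set.mem_iUnion, Set.mem_insert_iff,
    Set.mem_singleton_iff] at hr
  rcases hr with (((h | ⟨t, u, h | h | h | h | h | h⟩) | ⟨t, h | h⟩) | h | h) <;> subst h <;>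
      simp only [map_mul, map_inv, map_commutatorElement, FreeGroup.lift_apply_of,
        fmap_S, fmap_S', fmap_X, fmap_X', one_pow]
  · rw [mul_inv_eq_one]
    exact (rel_braid).symm
  · rw [mul_inv_eq_one, rel_x'_add, sq_add]
  · rw [mul_inv_eq_one, rel_x_add]
  · rw [commutatorElement_eq_one_iff_commute]
    exact (rel3 (u ^ 2) t).symm
  · rw [commutatorElement_eq_one_iff_commute]
    exact rel5 t u
  · rw [commutatorElement_eq_one_iff_commute]
    exact rel4 (t ^ 2) (u ^ 2)
  · rw [mul_inv_eq_one]
    have key : x' (t ^ 2) * x u * (x' (t ^ 2))⁻¹ * (x u)⁻¹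
        = (x u * x' (t ^ 2) * (x u)⁻¹ * (x' (t ^ 2))⁻¹)⁻¹ := by group
    rw [key, rel6 u (t ^ 2)]
    have e1 : ∀ a g : StB2 R, (a * g * a⁻¹)⁻¹ = a * g⁻¹ * a⁻¹ := by intros; group
    rw [mul_inv_rev, e1, e1, x_inv, x'_inv, neg_neg]
    rw [show (-(u ^ 2 * t ^ 2) : R) = (-(t * u)) ^ 2 by rw [neg_id]; ring,
      show (u * t ^ 2 : R) = t ^ 2 * u by ring]
  · rw [commutatorElement_eq_one_iff_commute]
    exact rel7' t
  · rw [commutatorElement_eq_one_iff_commute]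
    exact rel7 (t ^ 2)
  · rw [mul_inv_eq_one]
    exact rel8'
  · rw [mul_inv_eq_one]
    exact rel8

end B2Aux

end PaperAmalgams

open PaperAmalgams in
/-- If `2 = 0` in the commutative ring `R`, then the map `S ↔ S′`,
`X′(t) ↦ X(t) ↦ X′(t²)` extends to an endomorphism `φ` of `St_{B₂}(R)`. -/
theorem exists_b2_diagram_endomorphism (R : Type*) [CommRing R] (h2 : (2 : R) = 0) :
    ∃ φ : StB2 R →* StB2 R,
      φ (StB2.gen B2Gen.S) = StB2.gen B2Gen.S' ∧
      φ (StB2.gen B2Gen.S') = StB2.gen B2Gen.S ∧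
      (∀ t : R, φ (StB2.gen (B2Gen.X t)) = StB2.gen (B2Gen.X' (t ^ 2))) ∧
      (∀ t : R, φ (StB2.gen (B2Gen.X' t)) = StB2.gen (B2Gen.X t)) := by
  refine ⟨PresentedGroup.toGroup (B2Aux.lift_ok h2), ?_, ?_, fun t => ?_, fun t => ?_⟩ <;>
    exact PresentedGroup.toGroup.of (B2Aux.lift_ok h2)
end

section
/- There is a group endomorphism φ of St_{G₂}(R) satisfying φ(S) = S′, φ(S′) = S, φ(X(t)) = X′(t³) and φ(X′(t)) = X(t) for all t ∈ R. -/
/-! The exceptional diagram endomorphism of the Steinberg group of type `G₂` in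
characteristic `3`. -/

namespace PaperAmalgams


/-- Generators of the Steinberg group of type `G₂`: `S`, `S′` and the `X(t)`, `X′(t)`. -/
inductive G2Gen (R : Type*)
  | S : G2Gen R
  | S' : G2Gen R
  | X : R → G2Gen R
  | X' : R → G2Gen R

open scoped commutatorElement in
/-- The defining relators of `St_{G₂}(R)` (in its simplified form, valid when `3 = 0` in
`R`); see the statement context for the list of relations. -/
def g2Rels (R : Type*) [CommRing R] : Set (FreeGroup (G2Gen R)) :=
  let S : FreeGroup (G2Gen R) := .of .S
  let S' : FreeGroup (G2Gen R) := .of .S'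
  let X : R → FreeGroup (G2Gen R) := fun t => .of (.X t)
  let X' : R → FreeGroup (G2Gen R) := fun t => .of (.X' t)
  {S * S' * S * S' * S * S' * (S' * S * S' * S * S' * S)⁻¹,
   S ^ 2 * S' * (S ^ 2)⁻¹ * S',
   S' ^ 2 * S * (S' ^ 2)⁻¹ * S,
   S * (X 1 * S * X 1 * S⁻¹ * X 1)⁻¹,
   S' * (X' 1 * S' * X' 1 * S'⁻¹ * X' 1)⁻¹} ∪
  (⋃ (t : R),
    {⁅S ^ 2, X t⁆,
     ⁅S' ^ 2, X' t⁆,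
     S ^ 2 * X' t * (S ^ 2)⁻¹ * (X' (-t))⁻¹,
     S' ^ 2 * X t * (S' ^ 2)⁻¹ * (X (-t))⁻¹,
     ⁅S * S' * S * S' * S, X' t⁆,
     ⁅S' * S * S' * S * S', X t⁆}) ∪
  (⋃ (t : R) (u : R),
    {X t * X u * (X (t + u))⁻¹,
     X' t * X' u * (X' (t + u))⁻¹,
     ⁅X' t, S' * S * X' u * S⁻¹ * S'⁻¹⁆,
     ⁅X t, S * S' * X u * S'⁻¹ * S⁻¹⁆,
     ⁅S * S' * X t * S'⁻¹ * S⁻¹, S' * S * X' u * S⁻¹ * S'⁻¹⁆,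
     ⁅S * X' t * S⁻¹, S' * X u * S'⁻¹⁆,
     (X' t * (S * X' u * S⁻¹) * (X' t)⁻¹ * (S * X' u * S⁻¹)⁻¹) *
       (S' * S * X' (t * u) * S⁻¹ * S'⁻¹)⁻¹,
     (X t * (S' * X u * S'⁻¹) * (X t)⁻¹ * (S' * X u * S'⁻¹)⁻¹) *
       (S * S' * X (t * u) * S'⁻¹ * S⁻¹)⁻¹,
     (X t * X' u * (X t)⁻¹ * (X' u)⁻¹) *
       ((S * S' * X (t ^ 2 * u) * S'⁻¹ * S⁻¹) *
        (S' * X (-(t * u)) * S'⁻¹) *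
        (S * X' (t ^ 3 * u) * S⁻¹) *
        (S' * S * X' (-(t ^ 3 * u ^ 2)) * S⁻¹ * S'⁻¹))⁻¹})

/-- The Steinberg group `St_{G₂}(R)` (presented form, for rings with `3 = 0`). -/
abbrev StG2 (R : Type*) [CommRing R] : Type _ := PresentedGroup (g2Rels R)

/-- The images of the generators in `St_{G₂}(R)`. -/
def StG2.gen {R : Type*} [CommRing R] (g : G2Gen R) : StG2 R := PresentedGroup.of g



section G2DiagramAux

variable {R : Type*} [CommRing R]

open scoped commutatorElement

/-- The image of a generator in the presented group, as `PresentedGroup.mk` of `FreeGroup.of`. -/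
lemma mk_of (g : G2Gen R) :
    PresentedGroup.mk (g2Rels R) (FreeGroup.of g) = StG2.gen g := rfl

/-- Every relator maps to `1` in the presented group. -/
lemma relone {r : FreeGroup (G2Gen R)} (hr : r ∈ g2Rels R) :
    PresentedGroup.mk (g2Rels R) r = 1 :=
  (QuotientGroup.eq_one_iff r).mpr (Subgroup.subset_normalClosure hr)

/-- The candidate images of the generators under the diagram endomorphism. -/
def fG2 : G2Gen R → StG2 R
  | .S => StG2.gen G2Gen.S'
  | .S' => StG2.gen G2Gen.S
  | .X t => StG2.gen (G2Gen.X' (t ^ 3))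
  | .X' t => StG2.gen (G2Gen.X t)

lemma memA1 : ((FreeGroup.of (G2Gen.S : G2Gen R)) * (FreeGroup.of (G2Gen.S' : G2Gen R)) * (FreeGroup.of (G2Gen.S : G2Gen R)) * (FreeGroup.of (G2Gen.S' : G2Gen R)) * (FreeGroup.of (G2Gen.S : G2Gen R)) * (FreeGroup.of (G2Gen.S' : G2Gen R)) * (((FreeGroup.of (G2Gen.S' : G2Gen R)) * (FreeGroup.of (G2Gen.S : G2Gen R)) * (FreeGroup.of (G2Gen.S' : G2Gen R)) * (FreeGroup.of (G2Gen.S : G2Gen R)) * (FreeGroup.of (G2Gen.S' : G2Gen R)) * (FreeGroup.of (G2Gen.S : G2Gen R))))⁻¹) ∈ g2Rels R := by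
  unfold g2Rels
  refine Set.mem_union_left _ (Set.mem_union_left _ ?_)
  simp

lemma memA2 : ((FreeGroup.of (G2Gen.S : G2Gen R)) ^ 2 * (FreeGroup.of (G2Gen.S' : G2Gen R)) * ((FreeGroup.of (G2Gen.S : G2Gen R)) ^ 2)⁻¹ * (FreeGroup.of (G2Gen.S' : G2Gen R))) ∈ g2Rels R := by
  unfold g2Rels
  refine Set.mem_union_left _ (Set.mem_union_left _ ?_)
  simp

lemma memA3 : ((FreeGroup.of (G2Gen.S' : G2Gen R)) ^ 2 * (FreeGroup.of (G2Gen.S : G2Gen R)) * ((FreeGroup.of (G2Gen.S' : G2Gen R)) ^ 2)⁻¹ * (FreeGroup.of (G2Gen.S : G2Gen R))) ∈ g2Rels R := by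
  unfold g2Rels
  refine Set.mem_union_left _ (Set.mem_union_left _ ?_)
  simp

lemma memA4 : ((FreeGroup.of (G2Gen.S : G2Gen R)) * (((FreeGroup.of (G2Gen.X (1 : R))) * (FreeGroup.of (G2Gen.S : G2Gen R)) * (FreeGroup.of (G2Gen.X (1 : R))) * ((FreeGroup.of (G2Gen.S : G2Gen R)))⁻¹ * (FreeGroup.of (G2Gen.X (1 : R)))))⁻¹) ∈ g2Rels R := by
  unfold g2Rels
  refine Set.mem_union_left _ (Set.mem_union_left _ ?_)
  simp

lemma memA5 : ((FreeGroup.of (G2Gen.S' : G2Gen R)) * (((FreeGroup.of (G2Gen.X' (1 : R))) * (FreeGroup.of (G2Gen.S' : G2Gen R)) * (FreeGroup.of (G2Gen.X' (1 : R))) * ((FreeGroup.of (G2Gen.S' : G2Gen R)))⁻¹ * (FreeGroup.of (G2Gen.X' (1 : R)))))⁻¹) ∈ g2Rels R := by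
  unfold g2Rels
  refine Set.mem_union_left _ (Set.mem_union_left _ ?_)
  simp

lemma memB1 (t : R) : ⁅(FreeGroup.of (G2Gen.S : G2Gen R)) ^ 2, (FreeGroup.of (G2Gen.X (t : R)))⁆ ∈ g2Rels R := by
  unfold g2Rels
  refine Set.mem_union_left _ (Set.mem_union_right _ (Set.mem_iUnion.mpr ⟨t, ?_⟩))
  simp

lemma memB2 (t : R) : ⁅(FreeGroup.of (G2Gen.S' : G2Gen R)) ^ 2, (FreeGroup.of (G2Gen.X' (t : R)))⁆ ∈ g2Rels R := by
  unfold g2Rels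
  refine Set.mem_union_left _ (Set.mem_union_right _ (Set.mem_iUnion.mpr ⟨t, ?_⟩))
  simp

lemma memB3 (t : R) : ((FreeGroup.of (G2Gen.S : G2Gen R)) ^ 2 * (FreeGroup.of (G2Gen.X' (t : R))) * ((FreeGroup.of (G2Gen.S : G2Gen R)) ^ 2)⁻¹ * ((FreeGroup.of (G2Gen.X' (-t : R))))⁻¹) ∈ g2Rels R := by
  unfold g2Rels
  refine Set.mem_union_left _ (Set.mem_union_right _ (Set.mem_iUnion.mpr ⟨t, ?_⟩))
  simp

lemma memB4 (t : R) : ((FreeGroup.of (G2Gen.S' : G2Gen R)) ^ 2 * (FreeGroup.of (G2Gen.X (t : R))) * ((FreeGroup.of (G2Gen.S' : G2Gen R)) ^ 2)⁻¹ * ((FreeGroup.of (G2Gen.X (-t : R))))⁻¹) ∈ g2Rels R := by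
  unfold g2Rels
  refine Set.mem_union_left _ (Set.mem_union_right _ (Set.mem_iUnion.mpr ⟨t, ?_⟩))
  simp

lemma memB5 (t : R) : ⁅((FreeGroup.of (G2Gen.S : G2Gen R)) * (FreeGroup.of (G2Gen.S' : G2Gen R)) * (FreeGroup.of (G2Gen.S : G2Gen R)) * (FreeGroup.of (G2Gen.S' : G2Gen R)) * (FreeGroup.of (G2Gen.S : G2Gen R))), (FreeGroup.of (G2Gen.X' (t : R)))⁆ ∈ g2Rels R := by
  unfold g2Rels
  refine Set.mem_union_left _ (Set.mem_union_right _ (Set.mem_iUnion.mpr ⟨t, ?_⟩))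
  simp

lemma memB6 (t : R) : ⁅((FreeGroup.of (G2Gen.S' : G2Gen R)) * (FreeGroup.of (G2Gen.S : G2Gen R)) * (FreeGroup.of (G2Gen.S' : G2Gen R)) * (FreeGroup.of (G2Gen.S : G2Gen R)) * (FreeGroup.of (G2Gen.S' : G2Gen R))), (FreeGroup.of (G2Gen.X (t : R)))⁆ ∈ g2Rels R := by
  unfold g2Rels
  refine Set.mem_union_left _ (Set.mem_union_right _ (Set.mem_iUnion.mpr ⟨t, ?_⟩))
  simp

lemma memC1 (t : R) (u : R) : ((FreeGroup.of (G2Gen.X (t : R))) * (FreeGroup.of (G2Gen.X (u : R))) * ((FreeGroup.of (G2Gen.X (t + u : R))))⁻¹) ∈ g2Rels R := by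
  unfold g2Rels
  refine Set.mem_union_right _ (Set.mem_iUnion.mpr ⟨t, Set.mem_iUnion.mpr ⟨u, ?_⟩⟩)
  simp

lemma memC2 (t : R) (u : R) : ((FreeGroup.of (G2Gen.X' (t : R))) * (FreeGroup.of (G2Gen.X' (u : R))) * ((FreeGroup.of (G2Gen.X' (t + u : R))))⁻¹) ∈ g2Rels R := by
  unfold g2Rels
  refine Set.mem_union_right _ (Set.mem_iUnion.mpr ⟨t, Set.mem_iUnion.mpr ⟨u, ?_⟩⟩)
  simp

lemma memC3 (t : R) (u : R) : ⁅(FreeGroup.of (G2Gen.X' (t : R))), ((FreeGroup.of (G2Gen.S' : G2Gen R)) * (FreeGroup.of (G2Gen.S : G2Gen R)) * (FreeGroup.of (G2Gen.X' (u : R))) * ((FreeGroup.of (G2Gen.S : G2Gen R)))⁻¹ * ((FreeGroup.of (G2Gen.S' : G2Gen R)))⁻¹)⁆ ∈ g2Rels R := by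
  unfold g2Rels
  refine Set.mem_union_right _ (Set.mem_iUnion.mpr ⟨t, Set.mem_iUnion.mpr ⟨u, ?_⟩⟩)
  simp

lemma memC4 (t : R) (u : R) : ⁅(FreeGroup.of (G2Gen.X (t : R))), ((FreeGroup.of (G2Gen.S : G2Gen R)) * (FreeGroup.of (G2Gen.S' : G2Gen R)) * (FreeGroup.of (G2Gen.X (u : R))) * ((FreeGroup.of (G2Gen.S' : G2Gen R)))⁻¹ * ((FreeGroup.of (G2Gen.S : G2Gen R)))⁻¹)⁆ ∈ g2Rels R := by
  unfold g2Rels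
  refine Set.mem_union_right _ (Set.mem_iUnion.mpr ⟨t, Set.mem_iUnion.mpr ⟨u, ?_⟩⟩)
  simp

lemma memC5 (t : R) (u : R) : ⁅((FreeGroup.of (G2Gen.S : G2Gen R)) * (FreeGroup.of (G2Gen.S' : G2Gen R)) * (FreeGroup.of (G2Gen.X (t : R))) * ((FreeGroup.of (G2Gen.S' : G2Gen R)))⁻¹ * ((FreeGroup.of (G2Gen.S : G2Gen R)))⁻¹), ((FreeGroup.of (G2Gen.S' : G2Gen R)) * (FreeGroup.of (G2Gen.S : G2Gen R)) * (FreeGroup.of (G2Gen.X' (u : R))) * ((FreeGroup.of (G2Gen.S : G2Gen R)))⁻¹ * ((FreeGroup.of (G2Gen.S' : G2Gen R)))⁻¹)⁆ ∈ g2Rels R := by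
  unfold g2Rels
  refine Set.mem_union_right _ (Set.mem_iUnion.mpr ⟨t, Set.mem_iUnion.mpr ⟨u, ?_⟩⟩)
  simp

lemma memC6 (t : R) (u : R) : ⁅((FreeGroup.of (G2Gen.S : G2Gen R)) * (FreeGroup.of (G2Gen.X' (t : R))) * ((FreeGroup.of (G2Gen.S : G2Gen R)))⁻¹), ((FreeGroup.of (G2Gen.S' : G2Gen R)) * (FreeGroup.of (G2Gen.X (u : R))) * ((FreeGroup.of (G2Gen.S' : G2Gen R)))⁻¹)⁆ ∈ g2Rels R := by
  unfold g2Rels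
  refine Set.mem_union_right _ (Set.mem_iUnion.mpr ⟨t, Set.mem_iUnion.mpr ⟨u, ?_⟩⟩)
  simp

lemma memC7 (t : R) (u : R) : (((FreeGroup.of (G2Gen.X' (t : R))) * ((FreeGroup.of (G2Gen.S : G2Gen R)) * (FreeGroup.of (G2Gen.X' (u : R))) * ((FreeGroup.of (G2Gen.S : G2Gen R)))⁻¹) * ((FreeGroup.of (G2Gen.X' (t : R))))⁻¹ * (((FreeGroup.of (G2Gen.S : G2Gen R)) * (FreeGroup.of (G2Gen.X' (u : R))) * ((FreeGroup.of (G2Gen.S : G2Gen R)))⁻¹))⁻¹) * (((FreeGroup.of (G2Gen.S' : G2Gen R)) * (FreeGroup.of (G2Gen.S : G2Gen R)) * (FreeGroup.of (G2Gen.X' (t * u : R))) * ((FreeGroup.of (G2Gen.S : G2Gen R)))⁻¹ * ((FreeGroup.of (G2Gen.S' : G2Gen R)))⁻¹))⁻¹) ∈ g2Rels R := by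
  unfold g2Rels
  refine Set.mem_union_right _ (Set.mem_iUnion.mpr ⟨t, Set.mem_iUnion.mpr ⟨u, ?_⟩⟩)
  simp

lemma memC8 (t : R) (u : R) : (((FreeGroup.of (G2Gen.X (t : R))) * ((FreeGroup.of (G2Gen.S' : G2Gen R)) * (FreeGroup.of (G2Gen.X (u : R))) * ((FreeGroup.of (G2Gen.S' : G2Gen R)))⁻¹) * ((FreeGroup.of (G2Gen.X (t : R))))⁻¹ * (((FreeGroup.of (G2Gen.S' : G2Gen R)) * (FreeGroup.of (G2Gen.X (u : R))) * ((FreeGroup.of (G2Gen.S' : G2Gen R)))⁻¹))⁻¹) * (((FreeGroup.of (G2Gen.S : G2Gen R)) * (FreeGroup.of (G2Gen.S' : G2Gen R)) * (FreeGroup.of (G2Gen.X (t * u : R))) * ((FreeGroup.of (G2Gen.S' : G2Gen R)))⁻¹ * ((FreeGroup.of (G2Gen.S : G2Gen R)))⁻¹))⁻¹) ∈ g2Rels R := by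
  unfold g2Rels
  refine Set.mem_union_right _ (Set.mem_iUnion.mpr ⟨t, Set.mem_iUnion.mpr ⟨u, ?_⟩⟩)
  simp

lemma memC9 (t : R) (u : R) : (((FreeGroup.of (G2Gen.X (t : R))) * (FreeGroup.of (G2Gen.X' (u : R))) * ((FreeGroup.of (G2Gen.X (t : R))))⁻¹ * ((FreeGroup.of (G2Gen.X' (u : R))))⁻¹) * ((((FreeGroup.of (G2Gen.S : G2Gen R)) * (FreeGroup.of (G2Gen.S' : G2Gen R)) * (FreeGroup.of (G2Gen.X (t ^ 2 * u : R))) * ((FreeGroup.of (G2Gen.S' : G2Gen R)))⁻¹ * ((FreeGroup.of (G2Gen.S : G2Gen R)))⁻¹) * ((FreeGroup.of (G2Gen.S' : G2Gen R)) * (FreeGroup.of (G2Gen.X (-(t * u) : R))) * ((FreeGroup.of (G2Gen.S' : G2Gen R)))⁻¹) * ((FreeGroup.of (G2Gen.S : G2Gen R)) * (FreeGroup.of (G2Gen.X' (t ^ 3 * u : R))) * ((FreeGroup.of (G2Gen.S : G2Gen R)))⁻¹) * ((FreeGroup.of (G2Gen.S' : G2Gen R)) * (FreeGroup.of (G2Gen.S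 : G2Gen R)) * (FreeGroup.of (G2Gen.X' (-(t ^ 3 * u ^ 2) : R))) * ((FreeGroup.of (G2Gen.S : G2Gen R)))⁻¹ * ((FreeGroup.of (G2Gen.S' : G2Gen R)))⁻¹)))⁻¹) ∈ g2Rels R := by
  unfold g2Rels
  refine Set.mem_union_right _ (Set.mem_iUnion.mpr ⟨t, Set.mem_iUnion.mpr ⟨u, ?_⟩⟩)
  simp

lemma x_add (t u : R) :
    StG2.gen (G2Gen.X t) * StG2.gen (G2Gen.X u) = StG2.gen (G2Gen.X (t + u)) := by
  have h := relone (memC1 t u)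
  simp only [map_mul, map_inv, mk_of] at h
  exact mul_inv_eq_one.mp h

lemma x'_add (t u : R) :
    StG2.gen (G2Gen.X' t) * StG2.gen (G2Gen.X' u) = StG2.gen (G2Gen.X' (t + u)) := by
  have h := relone (memC2 t u)
  simp only [map_mul, map_inv, mk_of] at h
  exact mul_inv_eq_one.mp h

lemma x_zero : StG2.gen (G2Gen.X (0 : R)) = 1 := by
  have h := x_add (0 : R) 0
  rw [add_zero] at h
  have h2 : StG2.gen (G2Gen.X (0 : R)) * StG2.gen (G2Gen.X (0 : R)) =
      StG2.gen (G2Gen.X (0 : R)) * 1 := by rw [mul_one]; exact h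
  exact mul_left_cancel h2

lemma x'_zero : StG2.gen (G2Gen.X' (0 : R)) = 1 := by
  have h := x'_add (0 : R) 0
  rw [add_zero] at h
  have h2 : StG2.gen (G2Gen.X' (0 : R)) * StG2.gen (G2Gen.X' (0 : R)) =
      StG2.gen (G2Gen.X' (0 : R)) * 1 := by rw [mul_one]; exact h
  exact mul_left_cancel h2

lemma x_inv (t : R) : (StG2.gen (G2Gen.X t))⁻¹ = StG2.gen (G2Gen.X (-t)) := by
  have h := x_add t (-t)
  rw [add_neg_cancel, x_zero] at h
  exact inv_eq_of_mul_eq_one_right h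

lemma x'_inv (t : R) : (StG2.gen (G2Gen.X' t))⁻¹ = StG2.gen (G2Gen.X' (-t)) := by
  have h := x'_add t (-t)
  rw [add_neg_cancel, x'_zero] at h
  exact inv_eq_of_mul_eq_one_right h

end G2DiagramAux

end PaperAmalgams

open PaperAmalgams in
/-- If `3 = 0` in the commutative ring `R`, then the map `S ↔ S′`,
`X′(t) ↦ X(t) ↦ X′(t³)` extends to an endomorphism `φ` of `St_{G₂}(R)`. -/
theorem exists_g2_diagram_endomorphism (R : Type*) [CommRing R] (h3 : (3 : R) = 0) :
    ∃ φ : StG2 R →* StG2 R,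
      φ (StG2.gen G2Gen.S) = StG2.gen G2Gen.S' ∧
      φ (StG2.gen G2Gen.S') = StG2.gen G2Gen.S ∧
      (∀ t : R, φ (StG2.gen (G2Gen.X t)) = StG2.gen (G2Gen.X' (t ^ 3))) ∧
      (∀ t : R, φ (StG2.gen (G2Gen.X' t)) = StG2.gen (G2Gen.X t)) := by
  have key : ∀ r ∈ g2Rels R, FreeGroup.lift (fG2 (R := R)) r = 1 := by
    intro r hr
    simp only [g2Rels, Set.mem_union, Set.mem_iUnion, Set.mem_insert_iff,
      Set.mem_singleton_iff] at hr
    obtain ((rfl | rfl | rfl | rfl | rfl) |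
        ⟨t, (rfl | rfl | rfl | rfl | rfl | rfl)⟩) |
        ⟨t, u, (rfl | rfl | rfl | rfl | rfl | rfl | rfl | rfl | rfl)⟩ := hr
    · have h := relone (memA1 (R := R))
      simp only [map_mul, map_inv, map_pow, map_commutatorElement, FreeGroup.lift_apply_of, fG2, mk_of] at h ⊢
      rw [mul_inv_eq_one] at h ⊢; exact h.symm
    · have h := relone (memA3 (R := R))
      simp only [map_mul, map_inv, map_pow, map_commutatorElement, FreeGroup.lift_apply_of, fG2, mk_of] at h ⊢
      exact h
    · have h := relone (memA2 (R := R))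
      simp only [map_mul, map_inv, map_pow, map_commutatorElement, FreeGroup.lift_apply_of, fG2, mk_of] at h ⊢
      exact h
    · have h := relone (memA5 (R := R))
      simp only [map_mul, map_inv, map_pow, map_commutatorElement, FreeGroup.lift_apply_of, fG2, mk_of] at h ⊢
      rw [one_pow]
      exact h
    · have h := relone (memA4 (R := R))
      simp only [map_mul, map_inv, map_pow, map_commutatorElement, FreeGroup.lift_apply_of, fG2, mk_of] at h ⊢
      exact h
    · have h := relone (memB2 (t ^ 3))
      simp only [map_mul, map_inv, map_pow, map_commutatorElement, FreeGroup.lift_apply_of, fG2, mk_of] at h ⊢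
      exact h
    · have h := relone (memB1 t)
      simp only [map_mul, map_inv, map_pow, map_commutatorElement, FreeGroup.lift_apply_of, fG2, mk_of] at h ⊢
      exact h
    · have h := relone (memB4 t)
      simp only [map_mul, map_inv, map_pow, map_commutatorElement, FreeGroup.lift_apply_of, fG2, mk_of] at h ⊢
      exact h
    · have h := relone (memB3 (t ^ 3))
      simp only [map_mul, map_inv, map_pow, map_commutatorElement, FreeGroup.lift_apply_of, fG2, mk_of] at h ⊢
      rw [show ((-t) ^ 3 : R) = -(t ^ 3) by ring]
      exact h
    · have h := relone (memB6 t)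
      simp only [map_mul, map_inv, map_pow, map_commutatorElement, FreeGroup.lift_apply_of, fG2, mk_of] at h ⊢
      exact h
    · have h := relone (memB5 (t ^ 3))
      simp only [map_mul, map_inv, map_pow, map_commutatorElement, FreeGroup.lift_apply_of, fG2, mk_of] at h ⊢
      exact h
    · have h := relone (memC2 (t ^ 3) (u ^ 3))
      simp only [map_mul, map_inv, map_pow, map_commutatorElement, FreeGroup.lift_apply_of, fG2, mk_of] at h ⊢
      rw [show ((t + u) ^ 3 : R) = t ^ 3 + u ^ 3 by linear_combination (t ^ 2 * u + t * u ^ 2) * h3]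
      exact h
    · have h := relone (memC1 t u)
      simp only [map_mul, map_inv, map_pow, map_commutatorElement, FreeGroup.lift_apply_of, fG2, mk_of] at h ⊢
      exact h
    · have h := relone (memC4 t u)
      simp only [map_mul, map_inv, map_pow, map_commutatorElement, FreeGroup.lift_apply_of, fG2, mk_of] at h ⊢
      exact h
    · have h := relone (memC3 (t ^ 3) (u ^ 3))
      simp only [map_mul, map_inv, map_pow, map_commutatorElement, FreeGroup.lift_apply_of, fG2, mk_of] at h ⊢
      exact h
    · have h := relone (memC5 u (t ^ 3))
      simp only [map_mul, map_inv, map_pow, map_commutatorElement, FreeGroup.lift_apply_of, fG2, mk_of] at h ⊢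
      rw [← commutatorElement_inv, h, inv_one]
    · have h := relone (memC6 (u ^ 3) t)
      simp only [map_mul, map_inv, map_pow, map_commutatorElement, FreeGroup.lift_apply_of, fG2, mk_of] at h ⊢
      rw [← commutatorElement_inv, h, inv_one]
    · have h := relone (memC8 t u)
      simp only [map_mul, map_inv, map_pow, map_commutatorElement, FreeGroup.lift_apply_of, fG2, mk_of] at h ⊢
      exact h
    · have h := relone (memC7 (t ^ 3) (u ^ 3))
      simp only [map_mul, map_inv, map_pow, map_commutatorElement, FreeGroup.lift_apply_of, fG2, mk_of] at h ⊢
      rw [show ((t * u) ^ 3 : R) = t ^ 3 * u ^ 3 by ring]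
      exact h
    · have h := relone (memC9 u (t ^ 3))
      simp only [map_mul, map_inv, map_pow, map_commutatorElement, FreeGroup.lift_apply_of, fG2, mk_of] at h ⊢
      rw [mul_inv_eq_one] at h ⊢
      rw [show ((t ^ 2 * u) ^ 3 : R) = -(-(u ^ 3 * (t ^ 3) ^ 2)) by ring,
        show ((-(t * u)) ^ 3 : R) = -(u ^ 3 * t ^ 3) by ring,
        show (t ^ 3 * u : R) = -(-(u * t ^ 3)) by ring,
        show (-(t ^ 3 * u ^ 2) : R) = -(u ^ 2 * t ^ 3) by ring]
      rw [← x'_inv (-(u ^ 3 * (t ^ 3) ^ 2)), ← x'_inv (u ^ 3 * t ^ 3),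
        ← x_inv (-(u * t ^ 3)), ← x_inv (u ^ 2 * t ^ 3)]
      rw [show (StG2.gen (G2Gen.X' (t ^ 3 : R)) * StG2.gen (G2Gen.X (u : R)) * (StG2.gen (G2Gen.X' (t ^ 3 : R)))⁻¹ * (StG2.gen (G2Gen.X (u : R)))⁻¹) = (StG2.gen (G2Gen.X (u : R)) * StG2.gen (G2Gen.X' (t ^ 3 : R)) * (StG2.gen (G2Gen.X (u : R)))⁻¹ * (StG2.gen (G2Gen.X' (t ^ 3 : R)))⁻¹)⁻¹ by group, h]
      group
  exact ⟨PresentedGroup.toGroup key, PresentedGroup.toGroup.of key,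
    PresentedGroup.toGroup.of key, fun t => PresentedGroup.toGroup.of key,
    fun t => PresentedGroup.toGroup.of key⟩
end

section
/- There exists a finite set F ⊆ Rˣ × Rˣ such that every element 𝒫_{u,v} with u, v ∈ Rˣ lies in the normal closure in G of the finite set {𝒫_{u,v} : (u,v) ∈ F}. -/
/-! Finitely many of the torus relators `𝒫_{u,v}` normally generate all of them. -/

namespace PaperAmalgams

/-- Generators: `S` and the `X(t)`, `t ∈ R`. -/
inductive A1Gen (R : Type*)
  | S : A1Gen R
  | X : R → A1Gen R

variable {R : Type*} [CommRing R]

/-- The word `s̃(r) = X(r) ⬝ S X(r⁻¹) S⁻¹ ⬝ X(r)` in the free group. -/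
def sTilde (r : Rˣ) : FreeGroup (A1Gen R) :=
  .of (.X (r : R)) * .of .S * .of (.X ((r⁻¹ : Rˣ) : R)) * (FreeGroup.of .S)⁻¹ *
    .of (.X (r : R))

/-- The word `h̃(r) = s̃(r) s̃(1)⁻¹` in the free group. -/
def hTilde (r : Rˣ) : FreeGroup (A1Gen R) := sTilde r * (sTilde 1)⁻¹

/-- The defining relators of `G`: for each `r` in the chosen generating set `rs` of `Rˣ`
and each `t ∈ R`, the relators expressing
`h̃(r) X(t) h̃(r)⁻¹ = X(r² t)` and `h̃(r) ⬝ S X(t) S⁻¹ ⬝ h̃(r)⁻¹ = S X(r⁻² t) S⁻¹`. -/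
def torusRels (rs : Finset Rˣ) : Set (FreeGroup (A1Gen R)) :=
  ⋃ (r : Rˣ) (_ : r ∈ rs) (t : R),
    {hTilde r * .of (.X t) * (hTilde r)⁻¹ * (FreeGroup.of (.X ((r : R) ^ 2 * t)))⁻¹,
     hTilde r * (.of .S * .of (.X t) * (FreeGroup.of (A1Gen.S (R := R)))⁻¹) * (hTilde r)⁻¹ *
       (.of .S * .of (.X (((r⁻¹ : Rˣ) : R) ^ 2 * t)) * (FreeGroup.of (A1Gen.S (R := R)))⁻¹)⁻¹}

/-- The group `G`. -/
abbrev TorusGroup (rs : Finset Rˣ) : Type _ := PresentedGroup (torusRels rs)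

/-- The element `𝒫_{u,v} = h̃(u v) h̃(u)⁻¹ h̃(v)⁻¹ ∈ G`. -/
def P (rs : Finset Rˣ) (u v : Rˣ) : TorusGroup rs :=
  PresentedGroup.mk (torusRels rs) (hTilde (u * v) * (hTilde u)⁻¹ * (hTilde v)⁻¹)

end PaperAmalgams

open PaperAmalgams


private lemma prodsq_mem {R : Type*} [CommRing R] (rs : Finset Rˣ) (T : Finset Rˣ)
    (hT : T ⊆ rs) :
    (T.prod id) ^ 2 ∈ Subgroup.closure ((fun r : Rˣ => r ^ 2) '' (rs : Set Rˣ)) := by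
  rw [← Finset.prod_pow]
  exact Subgroup.prod_mem _ (fun t ht => Subgroup.subset_closure ⟨t, hT ht, rfl⟩)

private lemma prod_key {R : Type*} [CommRing R] [DecidableEq Rˣ] (T T' : Finset Rˣ) :
    T.prod id * T'.prod id = ((T ∩ T').prod id) ^ 2 * (symmDiff T T').prod id := by
  have h2 : (symmDiff T T') ∪ (T ∩ T') = T ∪ T' := by
    simpa using symmDiff_sup_inf (a := T) (b := T')
  have h3 : Disjoint (symmDiff T T') (T ∩ T') := by simpa using disjoint_symmDiff_inf T T'
  calc T.prod id * T'.prod id = (T ∪ T').prod id * (T ∩ T').prod id :=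
        Finset.prod_union_inter.symm
    _ = ((symmDiff T T').prod id * (T ∩ T').prod id) * (T ∩ T').prod id := by
        rw [← h2, Finset.prod_union h3]
    _ = ((T ∩ T').prod id) ^ 2 * (symmDiff T T').prod id := by
        rw [mul_assoc, mul_comm ((symmDiff T T').prod id), pow_two, mul_assoc]

private lemma decomp_lemma {R : Type*} [CommRing R] [DecidableEq Rˣ] (rs : Finset Rˣ)
    (hgen : Subgroup.closure (rs : Set Rˣ) = ⊤) (u : Rˣ) :
    ∃ q ∈ Subgroup.closure ((fun r : Rˣ => r ^ 2) '' (rs : Set Rˣ)),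
      ∃ T ⊆ rs, u = q * T.prod id := by
  have hu : u ∈ Subgroup.closure (rs : Set Rˣ) := by rw [hgen]; trivial
  refine Subgroup.closure_induction
    (p := fun x _ => ∃ q ∈ Subgroup.closure ((fun r : Rˣ => r ^ 2) '' (rs : Set Rˣ)),
      ∃ T ⊆ rs, x = q * T.prod id) ?_ ?_ ?_ ?_ hu
  · intro x hx
    exact ⟨1, one_mem _, {x}, by simpa using hx, by simp⟩
  · exact ⟨1, one_mem _, ∅, by simp, by simp⟩
  · rintro x y _ _ ⟨q, hq, T, hT, rfl⟩ ⟨q', hq', T', hT', rfl⟩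
    refine ⟨q * q' * ((T ∩ T').prod id) ^ 2,
      mul_mem (mul_mem hq hq') (prodsq_mem rs _ ((Finset.inter_subset_left).trans hT)),
      symmDiff T T', le_trans symmDiff_le_sup (Finset.union_subset hT hT'), ?_⟩
    calc q * T.prod id * (q' * T'.prod id) = q * q' * (T.prod id * T'.prod id) :=
          mul_mul_mul_comm q _ q' _
      _ = q * q' * ((T ∩ T').prod id ^ 2 * (symmDiff T T').prod id) := by rw [prod_key]
      _ = q * q' * (T ∩ T').prod id ^ 2 * (symmDiff T T').prod id := by group
  · rintro x _ ⟨q, hq, T, hT, rfl⟩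
    refine ⟨q⁻¹ * ((T.prod id) ^ 2)⁻¹, mul_mem (inv_mem hq) (inv_mem (prodsq_mem rs T hT)),
      T, hT, ?_⟩
    rw [mul_inv_rev, mul_comm, pow_two, mul_inv_rev, mul_assoc, mul_assoc]
    simp

private lemma abstract_mul {R : Type*} [CommRing R] [DecidableEq Rˣ] {Γ : Type*} [Group Γ]
    (rs : Finset Rˣ)
    (hgen : Subgroup.closure (rs : Set Rˣ) = ⊤)
    (h : Rˣ → Γ)
    (h1 : h 1 = 1)
    (hsq : ∀ r ∈ rs, h (r ^ 2) = h r * h r)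
    (star : ∀ r ∈ rs, ∀ u : Rˣ, h (r ^ 2 * u) = h r * h u * h r)
    (hsqc : ∀ r ∈ rs, ∀ T ⊆ rs, h (r ^ 2 * T.prod id) = h (r ^ 2) * h (T.prod id))
    (hcc : ∀ T ⊆ rs, ∀ T' ⊆ rs,
      h (T.prod id * T'.prod id) = h (T.prod id) * h (T'.prod id)) :
    ∀ u v : Rˣ, h (u * v) = h u * h v := by
  have comm_g : ∀ r ∈ rs, ∀ s ∈ rs, Commute (h r) (h s) := by
    intro r hr s hs
    have e1 : h (r ^ 2 * s) = h r * (h s * h r) := by rw [star r hr s, mul_assoc]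
    have e2 : h (r ^ 2 * s) = h r * (h r * h s) := by
      have := hsqc r hr {s} (by simpa using hs)
      simp only [Finset.prod_singleton, id] at this
      rw [this, hsq r hr, mul_assoc]
    exact (mul_left_cancel (e1.symm.trans e2)).symm
  have comm_c : ∀ r ∈ rs, ∀ T ⊆ rs, Commute (h r) (h (T.prod id)) := by
    intro r hr T hT
    have e1 : h (r ^ 2 * T.prod id) = h r * (h (T.prod id) * h r) := by
      rw [star r hr, mul_assoc]
    have e2 : h (r ^ 2 * T.prod id) = h r * (h r * h (T.prod id)) := by
      rw [hsqc r hr T hT, hsq r hr, mul_assoc]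
    exact (mul_left_cancel (e1.symm.trans e2)).symm
  -- CommAll
  have CA_iff : ∀ q ∈ Subgroup.closure ((fun r : Rˣ => r ^ 2) '' (rs : Set Rˣ)),
      ∀ w : Rˣ, (∀ r ∈ rs, Commute (h r) (h w)) ↔ (∀ r ∈ rs, Commute (h r) (h (q * w))) := by
    intro q hq
    refine Subgroup.closure_induction (p := fun q _ => ∀ w : Rˣ,
      (∀ r ∈ rs, Commute (h r) (h w)) ↔ (∀ r ∈ rs, Commute (h r) (h (q * w)))) ?_ ?_ ?_ ?_ hq
    · rintro x ⟨s, hs, rfl⟩ w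
      constructor
      · intro hw r hr
        rw [star s hs w]
        exact ((comm_g r hr s hs).mul_right (hw r hr)).mul_right (comm_g r hr s hs)
      · intro hw r hr
        have e : h w = (h s)⁻¹ * h (s ^ 2 * w) * (h s)⁻¹ := by rw [star s hs w]; group
        rw [e]
        exact (((comm_g r hr s hs).inv_right).mul_right (hw r hr)).mul_right
          ((comm_g r hr s hs).inv_right)
    · intro w; rw [one_mul]
    · intro x y _ _ ihx ihy w
      rw [mul_assoc]
      exact (ihy w).trans (ihx (y * w))
    · intro x _ ih w
      have := ih (x⁻¹ * w)
      rw [mul_inv_cancel_left] at this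
      exact this.symm
  have decomp := decomp_lemma rs hgen
  have comm_all : ∀ w : Rˣ, ∀ r ∈ rs, Commute (h r) (h w) := by
    intro w
    obtain ⟨q, hq, T, hT, rfl⟩ := decomp w
    exact (CA_iff q hq _).mp (fun r hr => comm_c r hr T hT)
  -- the "good" predicate
  set good : Rˣ → Prop :=
    fun u => (∀ v : Rˣ, h (u * v) = h u * h v) ∧ (∀ w : Rˣ, Commute (h u) (h w)) with hgood
  have good_one : good 1 := by
    constructor
    · intro v; rw [one_mul, h1, one_mul]
    · intro w; rw [h1]; exact Commute.one_left _
  have good_mul : ∀ {a b : Rˣ}, good a → good b → good (a * b) := by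
    rintro a b ⟨ha1, ha2⟩ ⟨hb1, hb2⟩
    constructor
    · intro v
      rw [mul_assoc, ha1, hb1, ha1 b, mul_assoc]
    · intro w
      rw [ha1 b]
      exact (ha2 w).mul_left (hb2 w)
  have good_inv : ∀ {a : Rˣ}, good a → good a⁻¹ := by
    rintro a ⟨ha1, ha2⟩
    have hone : (1 : Γ) = h a * h a⁻¹ := by
      have := ha1 a⁻¹
      rwa [mul_inv_cancel, h1] at this
    have hainv : h a⁻¹ = (h a)⁻¹ := (inv_eq_of_mul_eq_one_right hone.symm).symm
    constructor
    · intro v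
      have := ha1 (a⁻¹ * v)
      rw [mul_inv_cancel_left] at this
      rw [hainv, this, inv_mul_cancel_left]
    · intro w
      rw [hainv]
      exact (ha2 w).inv_left
  have good_sq : ∀ s ∈ rs, good (s ^ 2) := by
    intro s hs
    constructor
    · intro v
      rw [star s hs v, hsq s hs, mul_assoc, ← (comm_all v s hs).eq, ← mul_assoc]
    · intro w
      rw [hsq s hs]
      exact (comm_all w s hs).mul_left (comm_all w s hs)
  have good_Sq : ∀ q ∈ Subgroup.closure ((fun r : Rˣ => r ^ 2) '' (rs : Set Rˣ)), good q := by
    intro q hq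
    refine Subgroup.closure_induction (p := fun q _ => good q) ?_ good_one
      (fun _ _ _ _ ha hb => good_mul ha hb) (fun _ _ ha => good_inv ha) hq
    rintro x ⟨s, hs, rfl⟩
    exact good_sq s hs
  have good_c : ∀ T ⊆ rs, good (T.prod id) := by
    intro T hT
    constructor
    · intro v
      obtain ⟨q, hq, T', hT', rfl⟩ := decomp v
      have gq := good_Sq q hq
      calc h (T.prod id * (q * T'.prod id)) = h (q * (T.prod id * T'.prod id)) := by
            rw [mul_left_comm]
        _ = h q * h (T.prod id * T'.prod id) := gq.1 _
        _ = h q * (h (T.prod id) * h (T'.prod id)) := by rw [hcc T hT T' hT']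
        _ = h (T.prod id) * (h q * h (T'.prod id)) := by
            rw [← mul_assoc, (gq.2 (T.prod id)).eq, mul_assoc]
        _ = h (T.prod id) * h (q * T'.prod id) := by rw [← gq.1]
    · intro w
      obtain ⟨q, hq, T', hT', rfl⟩ := decomp w
      have gq := good_Sq q hq
      have c1 : Commute (h (T.prod id)) (h q) := (gq.2 _).symm
      have c2 : Commute (h (T.prod id)) (h (T'.prod id)) := by
        have e1 := hcc T hT T' hT'
        have e2 := hcc T' hT' T hT
        rw [mul_comm (T'.prod id) (T.prod id)] at e2
        show h (T.prod id) * h (T'.prod id) = h (T'.prod id) * h (T.prod id)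
        rw [← e1, ← e2]
      rw [gq.1]
      exact c1.mul_right c2
  intro u v
  obtain ⟨q, hq, T, hT, rfl⟩ := decomp u
  exact (good_mul (good_Sq q hq) (good_c T hT)).1 v

private lemma quot_aux {R : Type*} [CommRing R] [DecidableEq Rˣ] {Γ : Type*} [Group Γ]
    (rs W : Finset Rˣ) (hgen : Subgroup.closure (rs : Set Rˣ) = ⊤)
    (hWg : rs ⊆ W) (hWsq : ∀ r ∈ rs, r ^ 2 ∈ W) (hWc : ∀ T ⊆ rs, T.prod id ∈ W)
    (f : FreeGroup (A1Gen R) →* Γ)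
    (hrel : ∀ w ∈ torusRels rs, f w = 1)
    (hP : ∀ a ∈ W, ∀ b ∈ W, f (hTilde (a * b) * (hTilde a)⁻¹ * (hTilde b)⁻¹) = 1) :
    ∀ u v : Rˣ, f (hTilde (u * v) * (hTilde u)⁻¹ * (hTilde v)⁻¹) = 1 := by
  set h : Rˣ → Γ := fun w => f (hTilde w) with hh
  have hmul0 : ∀ a ∈ W, ∀ b ∈ W, h (a * b) = h b * h a := by
    intro a ha b hb
    have e := hP a ha b hb
    rw [map_mul, map_mul, map_inv, map_inv, mul_inv_eq_one, mul_inv_eq_iff_eq_mul] at e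
    exact e
  have E2 : ∀ a ∈ W, ∀ b ∈ W, h (a * b) = h a * h b := by
    intro a ha b hb
    rw [mul_comm]
    exact hmul0 b hb a ha
  have h1 : h 1 = 1 := by
    show f (hTilde 1) = 1
    rw [hTilde, mul_inv_cancel, map_one]
  have relX : ∀ r ∈ rs, ∀ t : R,
      f (hTilde r) * f (.of (.X t)) * (f (hTilde r))⁻¹ = f (.of (.X ((r : R) ^ 2 * t))) := by
    intro r hr t
    have hm : hTilde r * FreeGroup.of (A1Gen.X t) * (hTilde r)⁻¹ *
        (FreeGroup.of (A1Gen.X ((r : R) ^ 2 * t)))⁻¹ ∈ torusRels rs := by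
      refine Set.mem_iUnion.2 ⟨r, Set.mem_iUnion.2 ⟨hr, Set.mem_iUnion.2 ⟨t, ?_⟩⟩⟩
      exact Set.mem_insert _ _
    have e := hrel _ hm
    simp only [map_mul, map_inv] at e
    rwa [mul_inv_eq_one] at e
  have relS : ∀ r ∈ rs, ∀ t : R,
      f (hTilde r) * (f (.of .S) * f (.of (.X t)) * (f (.of (A1Gen.S (R := R))))⁻¹) *
        (f (hTilde r))⁻¹
      = f (.of .S) * f (.of (.X (((r⁻¹ : Rˣ) : R) ^ 2 * t))) *
          (f (.of (A1Gen.S (R := R))))⁻¹ := by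
    intro r hr t
    have hm : hTilde r * (.of .S * .of (.X t) * (FreeGroup.of (A1Gen.S (R := R)))⁻¹) *
        (hTilde r)⁻¹ *
        (.of .S * .of (.X (((r⁻¹ : Rˣ) : R) ^ 2 * t)) *
          (FreeGroup.of (A1Gen.S (R := R)))⁻¹)⁻¹ ∈ torusRels rs := by
      refine Set.mem_iUnion.2 ⟨r, Set.mem_iUnion.2 ⟨hr, Set.mem_iUnion.2 ⟨t, ?_⟩⟩⟩
      exact Set.mem_insert_iff.2 (Or.inr rfl)
    have e := hrel _ hm
    simp only [map_mul, map_inv] at e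
    rwa [mul_inv_eq_one] at e
  have grp1 : ∀ a x s y : Γ,
      a * (x * s * y * s⁻¹ * x) * a⁻¹
        = (a * x * a⁻¹) * (a * (s * y * s⁻¹) * a⁻¹) * (a * x * a⁻¹) := by
    intros; group
  have conjS : ∀ r ∈ rs, ∀ u : Rˣ,
      f (hTilde r) * f (sTilde u) * (f (hTilde r))⁻¹ = f (sTilde (r ^ 2 * u)) := by
    intro r hr u
    have hv : ((r ^ 2 * u : Rˣ) : R) = (r : R) ^ 2 * ((u : Rˣ) : R) := by
      rw [Units.val_mul, Units.val_pow_eq_pow_val]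
    have hv' : (((r ^ 2 * u)⁻¹ : Rˣ) : R) = ((r⁻¹ : Rˣ) : R) ^ 2 * ((u⁻¹ : Rˣ) : R) := by
      rw [mul_inv, ← inv_pow, Units.val_mul, Units.val_pow_eq_pow_val]
    have hXu := relX r hr ((u : Rˣ) : R)
    have hSu := relS r hr ((u⁻¹ : Rˣ) : R)
    simp only [sTilde, hv, hv', map_mul, map_inv]
    rw [grp1, hXu, hSu]
    group
  have hsplit : ∀ w : Rˣ, f (hTilde w) = f (sTilde w) * (f (sTilde 1))⁻¹ := by
    intro w
    rw [hTilde, map_mul, map_inv]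
  have conjH : ∀ r ∈ rs, ∀ u : Rˣ,
      h r * h u * (h r)⁻¹ = h (r ^ 2 * u) * (h (r ^ 2))⁻¹ := by
    intro r hr u
    have e1 := conjS r hr u
    have e2 := conjS r hr 1
    rw [mul_one] at e2
    show f (hTilde r) * f (hTilde u) * (f (hTilde r))⁻¹
      = f (hTilde (r ^ 2 * u)) * (f (hTilde (r ^ 2)))⁻¹
    rw [hsplit r] at e1 e2
    rw [hsplit r, hsplit u, hsplit (r ^ 2 * u), hsplit (r ^ 2), ← e1, ← e2]
    group
  have hsq : ∀ r ∈ rs, h (r ^ 2) = h r * h r := by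
    intro r hr
    rw [pow_two]
    exact E2 r (hWg hr) r (hWg hr)
  have star : ∀ r ∈ rs, ∀ u : Rˣ, h (r ^ 2 * u) = h r * h u * h r := by
    intro r hr u
    have e := conjH r hr u
    have e2 : h (r ^ 2 * u) = h r * h u * (h r)⁻¹ * h (r ^ 2) :=
      mul_inv_eq_iff_eq_mul.mp e.symm
    rw [e2, hsq r hr]
    group
  have hsqc : ∀ r ∈ rs, ∀ T ⊆ rs, h (r ^ 2 * T.prod id) = h (r ^ 2) * h (T.prod id) :=
    fun r hr T hT => E2 _ (hWsq r hr) _ (hWc T hT)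
  have hcc : ∀ T ⊆ rs, ∀ T' ⊆ rs,
      h (T.prod id * T'.prod id) = h (T.prod id) * h (T'.prod id) :=
    fun T hT T' hT' => E2 _ (hWc T hT) _ (hWc T' hT')
  have hmul := abstract_mul rs hgen h h1 hsq star hsqc hcc
  intro u v
  have hc : h u * h v = h v * h u := by
    rw [← hmul u v, ← hmul v u, mul_comm u v]
  simp only [map_mul, map_inv]
  show h (u * v) * (h u)⁻¹ * (h v)⁻¹ = 1
  rw [hmul u v, hc]
  group

open PaperAmalgams in
/-- If the unit group `Rˣ` of a commutative ring `R` is generated by the elements of a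
finite set `rs` that is closed under inversion, then there is a finite set
`F ⊆ Rˣ × Rˣ` such that every `𝒫_{u,v}` (`u, v ∈ Rˣ`) lies in the normal closure in `G`
of the finitely many `𝒫_{u,v}` with `(u, v) ∈ F`. -/
theorem torus_relators_finitely_generated {R : Type*} [CommRing R] (rs : Finset Rˣ)
    (hgen : Subgroup.closure (rs : Set Rˣ) = ⊤)
    (hinv : ∀ r ∈ rs, r⁻¹ ∈ rs) :
    ∃ F : Finset (Rˣ × Rˣ), ∀ u v : Rˣ,
      P rs u v ∈
        Subgroup.normalClosure ((fun p : Rˣ × Rˣ => P rs p.1 p.2) '' (F : Set (Rˣ × Rˣ))) := by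
  classical
  set W : Finset Rˣ := (rs ∪ rs.image (fun r => r ^ 2)) ∪
    rs.powerset.image (fun T => T.prod id) with hW
  refine ⟨W ×ˢ W, ?_⟩
  intro u v
  set N : Subgroup (TorusGroup rs) := Subgroup.normalClosure
    ((fun p : Rˣ × Rˣ => P rs p.1 p.2) '' ((W ×ˢ W : Finset (Rˣ × Rˣ)) : Set (Rˣ × Rˣ)))
    with hN
  haveI hNn : N.Normal := by rw [hN]; exact Subgroup.normalClosure_normal
  show P rs u v ∈ N
  rw [← QuotientGroup.eq_one_iff (P rs u v)]
  have hWg : rs ⊆ W := Finset.subset_union_left.trans Finset.subset_union_left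
  have hWsq : ∀ r ∈ rs, r ^ 2 ∈ W := fun r hr =>
    Finset.mem_union_left _ (Finset.mem_union_right _ (Finset.mem_image_of_mem _ hr))
  have hWc : ∀ T ⊆ rs, T.prod id ∈ W := fun T hT =>
    Finset.mem_union_right _ (Finset.mem_image_of_mem _ (Finset.mem_powerset.2 hT))
  have hrel : ∀ w ∈ torusRels rs,
      ((QuotientGroup.mk' N).comp (PresentedGroup.mk (torusRels rs))) w = 1 := by
    intro w hw
    have h0 : PresentedGroup.mk (torusRels rs) w = 1 :=
      (QuotientGroup.eq_one_iff _).mpr (Subgroup.subset_normalClosure hw)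
    rw [MonoidHom.comp_apply, h0, map_one]
  have hP : ∀ a ∈ W, ∀ b ∈ W,
      ((QuotientGroup.mk' N).comp (PresentedGroup.mk (torusRels rs)))
        (hTilde (a * b) * (hTilde a)⁻¹ * (hTilde b)⁻¹) = 1 := by
    intro a ha b hb
    have hmem : P rs a b ∈ N :=
      Subgroup.subset_normalClosure ⟨(a, b),
        Finset.mem_coe.2 (Finset.mem_product.2 ⟨ha, hb⟩), rfl⟩
    exact (QuotientGroup.eq_one_iff (P rs a b)).mpr hmem
  exact quot_aux rs W hgen hWg hWsq hWc _ hrel hP u v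
end

section
/- If R is finitely generated as a commutative ring (i.e. R is a finitely generated ℤ-algebra), then the group St_{A₂}(R) is finitely generated. -/
/-! Finite generation of the Steinberg group of type `A₂` over a finitely generated
commutative ring. -/

namespace PaperAmalgams

open scoped commutatorElement

/-- Generators of the Steinberg group of type `A₂`: `S`, `S′` and the `X(t)`, `X′(t)`. -/
inductive A2Gen (R : Type*)
  | S : A2Gen R
  | S' : A2Gen R
  | X : R → A2Gen R
  | X' : R → A2Gen R

/-- The defining relators of `St_{A₂}(R)`: for all `t, u ∈ R`,
`S S′ S = S′ S S′`; `S² S′ S⁻² = S′⁻¹` (& primed); `X(t) X(u) = X(t+u)` (& primed);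
`S² ⇄ X(t)` (& primed); `S² X′(t) S⁻² = X′(−t)` (& primed);
`S S′ X(t) = X′(t) S S′` (& primed); `[X(t), X′(u)] = S X′(t u) S⁻¹` (& primed);
`X(t) ⇄ S X′(u) S⁻¹` (& primed); `S = X(1) S X(1) S⁻¹ X(1)` (& primed). -/
def a2Rels (R : Type*) [CommRing R] : Set (FreeGroup (A2Gen R)) :=
  let S : FreeGroup (A2Gen R) := .of .S
  let S' : FreeGroup (A2Gen R) := .of .S'
  let X : R → FreeGroup (A2Gen R) := fun t => .of (.X t)
  let X' : R → FreeGroup (A2Gen R) := fun t => .of (.X' t)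
  {S * S' * S * (S' * S * S')⁻¹,
   S ^ 2 * S' * (S ^ 2)⁻¹ * S',
   S' ^ 2 * S * (S' ^ 2)⁻¹ * S,
   S * (X 1 * S * X 1 * S⁻¹ * X 1)⁻¹,
   S' * (X' 1 * S' * X' 1 * S'⁻¹ * X' 1)⁻¹} ∪
  (⋃ (t : R),
    {⁅S ^ 2, X t⁆,
     ⁅S' ^ 2, X' t⁆,
     S ^ 2 * X' t * (S ^ 2)⁻¹ * (X' (-t))⁻¹,
     S' ^ 2 * X t * (S' ^ 2)⁻¹ * (X (-t))⁻¹,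
     S * S' * X t * (X' t * S * S')⁻¹,
     S' * S * X' t * (X t * S' * S)⁻¹}) ∪
  (⋃ (t : R) (u : R),
    {X t * X u * (X (t + u))⁻¹,
     X' t * X' u * (X' (t + u))⁻¹,
     (X t * X' u * (X t)⁻¹ * (X' u)⁻¹) * (S * X' (t * u) * S⁻¹)⁻¹,
     (X' t * X u * (X' t)⁻¹ * (X u)⁻¹) * (S' * X (t * u) * S'⁻¹)⁻¹,
     ⁅X t, S * X' u * S⁻¹⁆,
     ⁅X' t, S' * X u * S'⁻¹⁆})

/-- The Steinberg group `St_{A₂}(R)`. -/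
abbrev StA2 (R : Type*) [CommRing R] : Type _ := PresentedGroup (a2Rels R)

variable {R : Type*} [CommRing R]

lemma rel_eq_one {r : FreeGroup (A2Gen R)} (h : r ∈ a2Rels R) :
    PresentedGroup.mk (a2Rels R) r = 1 :=
  (QuotientGroup.eq_one_iff r).mpr (Subgroup.subset_normalClosure h)

lemma rel_add (t u : R) :
    (PresentedGroup.of (A2Gen.X t) : StA2 R) * PresentedGroup.of (A2Gen.X u) =
      PresentedGroup.of (A2Gen.X (t + u)) := by
  have hm : (FreeGroup.of (A2Gen.X t) * .of (.X u) * (.of (.X (t+u)))⁻¹ : FreeGroup (A2Gen R))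
      ∈ a2Rels R := by
    unfold a2Rels
    simp only [Set.mem_union, Set.mem_iUnion, Set.mem_insert_iff, Set.mem_singleton_iff]
    right; exact ⟨t, u, Or.inl rfl⟩
  have h := rel_eq_one hm
  simp only [map_mul, map_inv] at h
  rw [mul_inv_eq_one] at h
  exact h

lemma rel_comm1 (t : R) :
    (PresentedGroup.of A2Gen.S : StA2 R) * PresentedGroup.of A2Gen.S' *
      PresentedGroup.of (A2Gen.X t) =
    PresentedGroup.of (A2Gen.X' t) * PresentedGroup.of A2Gen.S *
      PresentedGroup.of A2Gen.S' := by
  have hm : (FreeGroup.of A2Gen.S * .of A2Gen.S' * .of (.X t) *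
      (.of (.X' t) * .of A2Gen.S * .of A2Gen.S')⁻¹ : FreeGroup (A2Gen R)) ∈ a2Rels R := by
    unfold a2Rels
    simp only [Set.mem_union, Set.mem_iUnion, Set.mem_insert_iff, Set.mem_singleton_iff]
    left; right
    exact ⟨t, Or.inr (Or.inr (Or.inr (Or.inr (Or.inl rfl))))⟩
  have h := rel_eq_one hm
  simp only [map_mul, map_inv] at h
  rw [mul_inv_eq_one] at h
  exact h

lemma rel_comm2 (t : R) :
    (PresentedGroup.of A2Gen.S' : StA2 R) * PresentedGroup.of A2Gen.S *
      PresentedGroup.of (A2Gen.X' t) =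
    PresentedGroup.of (A2Gen.X t) * PresentedGroup.of A2Gen.S' *
      PresentedGroup.of A2Gen.S := by
  have hm : (FreeGroup.of A2Gen.S' * .of A2Gen.S * .of (.X' t) *
      (.of (.X t) * .of A2Gen.S' * .of A2Gen.S)⁻¹ : FreeGroup (A2Gen R)) ∈ a2Rels R := by
    unfold a2Rels
    simp only [Set.mem_union, Set.mem_iUnion, Set.mem_insert_iff, Set.mem_singleton_iff]
    left; right
    exact ⟨t, Or.inr (Or.inr (Or.inr (Or.inr (Or.inr rfl))))⟩
  have h := rel_eq_one hm
  simp only [map_mul, map_inv] at h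
  rw [mul_inv_eq_one] at h
  exact h

lemma rel_mul (t u : R) :
    (PresentedGroup.of (A2Gen.X t) : StA2 R) * PresentedGroup.of (A2Gen.X' u) *
      (PresentedGroup.of (A2Gen.X t))⁻¹ * (PresentedGroup.of (A2Gen.X' u))⁻¹ =
    PresentedGroup.of A2Gen.S * PresentedGroup.of (A2Gen.X' (t * u)) *
      (PresentedGroup.of A2Gen.S)⁻¹ := by
  have hm : ((FreeGroup.of (A2Gen.X t) * .of (.X' u) * (.of (.X t))⁻¹ * (.of (.X' u))⁻¹) *
      (.of A2Gen.S * .of (.X' (t*u)) * (.of A2Gen.S)⁻¹)⁻¹ : FreeGroup (A2Gen R)) ∈ a2Rels R := by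
    unfold a2Rels
    simp only [Set.mem_union, Set.mem_iUnion, Set.mem_insert_iff, Set.mem_singleton_iff]
    right
    exact ⟨t, u, Or.inr (Or.inr (Or.inl rfl))⟩
  have h := rel_eq_one hm
  simp only [map_mul, map_inv] at h
  rw [mul_inv_eq_one] at h
  exact h

end PaperAmalgams

open PaperAmalgams in
/-- If `R` is a finitely generated commutative ring (finitely generated as a
`ℤ`-algebra), then `St_{A₂}(R)` is finitely generated. -/
theorem stA2_fg_of_finiteType {R : Type*} [CommRing R] [Algebra.FiniteType ℤ R] :
    Group.FG (StA2 R) := by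
  obtain ⟨σ, hσ⟩ := ‹Algebra.FiniteType ℤ R›.out
  set T : Set (StA2 R) :=
    {PresentedGroup.of A2Gen.S, PresentedGroup.of A2Gen.S'} ∪
      ((fun t : R => PresentedGroup.of (A2Gen.X t)) '' insert 1 ↑σ) with hT
  set H : Subgroup (StA2 R) := Subgroup.closure T with hH
  have hS : (PresentedGroup.of A2Gen.S : StA2 R) ∈ H :=
    Subgroup.subset_closure (Or.inl (Or.inl rfl))
  have hS' : (PresentedGroup.of A2Gen.S' : StA2 R) ∈ H :=
    Subgroup.subset_closure (Or.inl (Or.inr rfl))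
  -- X' from X
  have hx' : ∀ t : R, (PresentedGroup.of (A2Gen.X t) : StA2 R) ∈ H →
      (PresentedGroup.of (A2Gen.X' t) : StA2 R) ∈ H := by
    intro t ht
    have : (PresentedGroup.of (A2Gen.X' t) : StA2 R) =
        PresentedGroup.of A2Gen.S * PresentedGroup.of A2Gen.S' *
          PresentedGroup.of (A2Gen.X t) * (PresentedGroup.of A2Gen.S')⁻¹ *
          (PresentedGroup.of A2Gen.S)⁻¹ := by
      rw [rel_comm1 t]; group
    rw [this]
    exact mul_mem (mul_mem (mul_mem (mul_mem hS hS') ht) (inv_mem hS')) (inv_mem hS)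
  -- X from X'
  have hx : ∀ t : R, (PresentedGroup.of (A2Gen.X' t) : StA2 R) ∈ H →
      (PresentedGroup.of (A2Gen.X t) : StA2 R) ∈ H := by
    intro t ht
    have : (PresentedGroup.of (A2Gen.X t) : StA2 R) =
        PresentedGroup.of A2Gen.S' * PresentedGroup.of A2Gen.S *
          PresentedGroup.of (A2Gen.X' t) * (PresentedGroup.of A2Gen.S)⁻¹ *
          (PresentedGroup.of A2Gen.S')⁻¹ := by
      rw [rel_comm2 t]; group
    rw [this]
    exact mul_mem (mul_mem (mul_mem (mul_mem hS' hS) ht) (inv_mem hS)) (inv_mem hS')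
  have hzero : (PresentedGroup.of (A2Gen.X (0:R)) : StA2 R) = 1 := by
    have h := rel_add (0:R) 0
    rw [add_zero] at h
    exact (mul_eq_left).mp h
  have hone : (PresentedGroup.of (A2Gen.X (1:R)) : StA2 R) ∈ H :=
    Subgroup.subset_closure (Or.inr ⟨1, Set.mem_insert 1 _, rfl⟩)
  -- the set of t with X t ∈ H is a subring
  let A : Subring R :=
    { carrier := {t : R | (PresentedGroup.of (A2Gen.X t) : StA2 R) ∈ H}
      one_mem' := hone
      zero_mem' := by simp only [Set.mem_setOf_eq, hzero]; exact one_mem H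
      add_mem' := by
        intro t u ht hu
        simp only [Set.mem_setOf_eq] at *
        rw [← rel_add t u]
        exact mul_mem ht hu
      neg_mem' := by
        intro t ht
        simp only [Set.mem_setOf_eq] at *
        have h := rel_add t (-t)
        rw [add_neg_cancel, hzero] at h
        rw [eq_inv_of_mul_eq_one_right h]
        exact inv_mem ht
      mul_mem' := by
        intro t u ht hu
        simp only [Set.mem_setOf_eq] at *
        have hu' := hx' u hu
        have key : (PresentedGroup.of (A2Gen.X' (t * u)) : StA2 R) =
            (PresentedGroup.of A2Gen.S)⁻¹ *
              (PresentedGroup.of (A2Gen.X t) * PresentedGroup.of (A2Gen.X' u) *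
                (PresentedGroup.of (A2Gen.X t))⁻¹ * (PresentedGroup.of (A2Gen.X' u))⁻¹) *
              PresentedGroup.of A2Gen.S := by
          rw [rel_mul t u]; group
        have hXtu' : (PresentedGroup.of (A2Gen.X' (t * u)) : StA2 R) ∈ H := by
          rw [key]
          exact mul_mem (mul_mem (inv_mem hS)
            (mul_mem (mul_mem (mul_mem ht hu') (inv_mem ht)) (inv_mem hu'))) hS
        exact hx (t * u) hXtu' }
  have hA : ∀ t : R, t ∈ A := by
    intro t
    have h1 : t ∈ Algebra.adjoin ℤ (↑σ : Set R) := by rw [hσ]; trivial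
    rw [Algebra.adjoin_int] at h1
    have h2 : Subring.closure (↑σ : Set R) ≤ A :=
      Subring.closure_le.mpr (fun g hg =>
        Subgroup.subset_closure (Or.inr ⟨g, Set.mem_insert_of_mem _ hg, rfl⟩))
    exact h2 h1
  have htop : H = ⊤ := by
    rw [eq_top_iff, ← PresentedGroup.closure_range_of (a2Rels R)]
    apply Subgroup.closure_le _ |>.mpr
    rintro _ ⟨g, rfl⟩
    cases g with
    | S => exact hS
    | S' => exact hS'
    | X t => exact hA t
    | X' t => exact hx' t (hA t)
  rw [Group.fg_iff]
  refine ⟨T, htop, ?_⟩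
  exact ((Set.finite_singleton _).insert _).union ((σ.finite_toSet.insert 1).image _)
end

section
/- If R is finitely generated as a commutative ring (i.e. R is a finitely generated ℤ-algebra), then the group St_{B₂}(R) is finitely generated. -/
/-! Finite generation of the Steinberg group of type `B₂` over a finitely generated
commutative ring. -/

namespace PaperAmalgams

open scoped commutatorElement

/-- The defining relators of `St_{B₂}(R)`: for all `t, u ∈ R`,
`S S′ S S′ = S′ S S′ S`; `S² ⇄ S′`; `S′² S S′⁻² = S⁻¹`;
`X(t) X(u) = X(t+u)` (& primed); `S² ⇄ X(t)` (& primed); `S² ⇄ X′(t)`;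
`S′² X(t) S′⁻² = X(−t)`; `S S′ S ⇄ X′(t)` (& primed);
`S X′(t) S⁻¹ ⇄ S′ X(u) S′⁻¹`; `X′(t) ⇄ S X′(u) S⁻¹`;
`[X(t), S′ X(u) S′⁻¹] = S X′(−2 t u) S⁻¹`;
`[X(t), X′(u)] = S′ X(−t u) S′⁻¹ ⬝ S X′(t² u) S⁻¹`;
`S = X(1) S X(1) S⁻¹ X(1)` (& primed). -/
def b2FullRels (R : Type*) [CommRing R] : Set (FreeGroup (B2Gen R)) :=
  let S : FreeGroup (B2Gen R) := .of .S
  let S' : FreeGroup (B2Gen R) := .of .S'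
  let X : R → FreeGroup (B2Gen R) := fun t => .of (.X t)
  let X' : R → FreeGroup (B2Gen R) := fun t => .of (.X' t)
  {S * S' * S * S' * (S' * S * S' * S)⁻¹,
   ⁅S ^ 2, S'⁆,
   S' ^ 2 * S * (S' ^ 2)⁻¹ * S,
   S * (X 1 * S * X 1 * S⁻¹ * X 1)⁻¹,
   S' * (X' 1 * S' * X' 1 * S'⁻¹ * X' 1)⁻¹} ∪
  (⋃ (t : R),
    {⁅S ^ 2, X t⁆,
     ⁅S' ^ 2, X' t⁆,
     ⁅S ^ 2, X' t⁆,
     S' ^ 2 * X t * (S' ^ 2)⁻¹ * (X (-t))⁻¹,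
     ⁅S * S' * S, X' t⁆,
     ⁅S' * S * S', X t⁆}) ∪
  (⋃ (t : R) (u : R),
    {X t * X u * (X (t + u))⁻¹,
     X' t * X' u * (X' (t + u))⁻¹,
     ⁅S * X' t * S⁻¹, S' * X u * S'⁻¹⁆,
     ⁅X' t, S * X' u * S⁻¹⁆,
     (X t * (S' * X u * S'⁻¹) * (X t)⁻¹ * (S' * X u * S'⁻¹)⁻¹) *
       (S * X' (-(2 * t * u)) * S⁻¹)⁻¹,
     (X t * X' u * (X t)⁻¹ * (X' u)⁻¹) *
       (S' * X (-(t * u)) * S'⁻¹ * (S * X' (t ^ 2 * u) * S⁻¹))⁻¹})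

/-- The Steinberg group `St_{B₂}(R)`. -/
abbrev StB2Full (R : Type*) [CommRing R] : Type _ := PresentedGroup (b2FullRels R)

end PaperAmalgams

namespace StB2FGAux

open PaperAmalgams

variable {R : Type*} [CommRing R]

/-- Image of the generator `X t` in the Steinberg group. -/
def xg (t : R) : StB2Full R := PresentedGroup.of (B2Gen.X t)

/-- Image of the generator `X' t` in the Steinberg group. -/
def xg' (t : R) : StB2Full R := PresentedGroup.of (B2Gen.X' t)

/-- Image of the generator `S` in the Steinberg group. -/
def sg : StB2Full R := PresentedGroup.of B2Gen.S

/-- Image of the generator `S'` in the Steinberg group. -/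
def sg' : StB2Full R := PresentedGroup.of B2Gen.S'

lemma mk_eq_one {w : FreeGroup (B2Gen R)} (h : w ∈ b2FullRels R) :
    PresentedGroup.mk (b2FullRels R) w = 1 :=
  (QuotientGroup.eq_one_iff w).mpr (Subgroup.subset_normalClosure h)

lemma mem_rels_add (t u : R) :
    (FreeGroup.of (B2Gen.X t) * FreeGroup.of (B2Gen.X u) *
      (FreeGroup.of (B2Gen.X (t + u)))⁻¹) ∈ b2FullRels R := by
  simp only [b2FullRels, Set.mem_union, Set.mem_iUnion, Set.mem_insert_iff,
    Set.mem_singleton_iff]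
  right
  exact ⟨t, u, Or.inl rfl⟩

lemma mem_rels_add' (t u : R) :
    (FreeGroup.of (B2Gen.X' t) * FreeGroup.of (B2Gen.X' u) *
      (FreeGroup.of (B2Gen.X' (t + u)))⁻¹) ∈ b2FullRels R := by
  simp only [b2FullRels, Set.mem_union, Set.mem_iUnion, Set.mem_insert_iff,
    Set.mem_singleton_iff]
  right
  exact ⟨t, u, Or.inr (Or.inl rfl)⟩

lemma mem_rels12 (t u : R) :
    ((FreeGroup.of (B2Gen.X t) * FreeGroup.of (B2Gen.X' u) *
        (FreeGroup.of (B2Gen.X t))⁻¹ * (FreeGroup.of (B2Gen.X' u))⁻¹) *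
      (FreeGroup.of (B2Gen.S') * FreeGroup.of (B2Gen.X (-(t * u))) *
          (FreeGroup.of (B2Gen.S'))⁻¹ *
        (FreeGroup.of (B2Gen.S) * FreeGroup.of (B2Gen.X' (t ^ 2 * u)) *
          (FreeGroup.of (B2Gen.S))⁻¹))⁻¹) ∈ b2FullRels R := by
  simp only [b2FullRels, Set.mem_union, Set.mem_iUnion, Set.mem_insert_iff,
    Set.mem_singleton_iff]
  right
  exact ⟨t, u, Or.inr (Or.inr (Or.inr (Or.inr (Or.inr rfl))))⟩

lemma xg_add (t u : R) : (xg t * xg u : StB2Full R) = xg (t + u) := by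
  have h := mk_eq_one (mem_rels_add t u)
  rw [map_mul, map_mul, map_inv] at h
  exact mul_inv_eq_one.mp h

lemma xg'_add (t u : R) : (xg' t * xg' u : StB2Full R) = xg' (t + u) := by
  have h := mk_eq_one (mem_rels_add' t u)
  rw [map_mul, map_mul, map_inv] at h
  exact mul_inv_eq_one.mp h

lemma rel12 (t u : R) :
    (xg t * xg' u * (xg t)⁻¹ * (xg' u)⁻¹ : StB2Full R) =
      sg' * xg (-(t * u)) * sg'⁻¹ * (sg * xg' (t ^ 2 * u) * sg⁻¹) := by
  have h := mk_eq_one (mem_rels12 t u)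
  simp only [map_mul, map_inv] at h
  exact mul_inv_eq_one.mp h

lemma xg_zero : (xg (0 : R) : StB2Full R) = 1 := by
  have h := xg_add (0 : R) 0
  rw [add_zero] at h
  exact mul_left_cancel (h.trans (mul_one _).symm)

lemma xg'_zero : (xg' (0 : R) : StB2Full R) = 1 := by
  have h := xg'_add (0 : R) 0
  rw [add_zero] at h
  exact mul_left_cancel (h.trans (mul_one _).symm)

lemma xg_inv (t : R) : ((xg t)⁻¹ : StB2Full R) = xg (-t) :=
  inv_eq_of_mul_eq_one_right (by rw [xg_add, add_neg_cancel, xg_zero])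

lemma xg'_inv (t : R) : ((xg' t)⁻¹ : StB2Full R) = xg' (-t) :=
  inv_eq_of_mul_eq_one_right (by rw [xg'_add, add_neg_cancel, xg'_zero])

variable (H : Subgroup (StB2Full R))

lemma ruleC (hs : sg (R := R) ∈ H) (hs' : sg' (R := R) ∈ H) {t u : R}
    (hxt : xg t ∈ H) (hx'u : xg' u ∈ H) (hxtu : xg (t * u) ∈ H) :
    xg' (t ^ 2 * u) ∈ H := by
  have hneg : (xg (-(t * u)) : StB2Full R) ∈ H := by
    rw [← xg_inv]; exact inv_mem hxtu
  have key : (xg' (t ^ 2 * u) : StB2Full R) =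
      sg⁻¹ * ((sg' * xg (-(t * u)) * sg'⁻¹)⁻¹ *
        (xg t * xg' u * (xg t)⁻¹ * (xg' u)⁻¹)) * sg := by
    rw [rel12 t u]
    group
  rw [key]
  exact mul_mem (mul_mem (inv_mem hs)
    (mul_mem (inv_mem (mul_mem (mul_mem hs' hneg) (inv_mem hs')))
      (mul_mem (mul_mem (mul_mem hxt hx'u) (inv_mem hxt)) (inv_mem hx'u)))) hs

lemma ruleB (hs : sg (R := R) ∈ H) (hs' : sg' (R := R) ∈ H)
    (hx1 : xg (1 : R) ∈ H) {u : R} (hx'u : xg' u ∈ H) : xg u ∈ H := by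
  have hu2 : (xg' ((1 : R) ^ 2 * u) : StB2Full R) ∈ H := by
    rwa [one_pow, one_mul]
  have key : (xg (-(1 * u)) : StB2Full R) =
      sg'⁻¹ * ((xg 1 * xg' u * (xg 1)⁻¹ * (xg' u)⁻¹) *
        (sg * xg' ((1 : R) ^ 2 * u) * sg⁻¹)⁻¹) * sg' := by
    rw [rel12 (1 : R) u]
    group
  have hneg : (xg (-(1 * u)) : StB2Full R) ∈ H := by
    rw [key]
    exact mul_mem (mul_mem (inv_mem hs')
      (mul_mem (mul_mem (mul_mem (mul_mem hx1 hx'u) (inv_mem hx1)) (inv_mem hx'u))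
        (inv_mem (mul_mem (mul_mem hs hu2) (inv_mem hs))))) hs'
  have h2 := inv_mem hneg
  rw [xg_inv, neg_neg, one_mul] at h2
  exact h2

end StB2FGAux

open PaperAmalgams in
/-- If `R` is a finitely generated commutative ring (finitely generated as a
`ℤ`-algebra), then `St_{B₂}(R)` is finitely generated. -/
theorem stB2_fg_of_finiteType {R : Type*} [CommRing R] [Algebra.FiniteType ℤ R] :
    Group.FG (StB2Full R) := by
  classical
  open StB2FGAux in
  obtain ⟨n, f, hf⟩ := Algebra.FiniteType.iff_quotient_mvPolynomial''.mp
    (inferInstance : Algebra.FiniteType ℤ R)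
  set gen : Fin n → R := fun i => f (MvPolynomial.X i) with hgen
  set V : Finset (Fin n) → R := fun t => ∏ i ∈ t, gen i with hV
  set genSet : Set (StB2Full R) :=
    ({StB2FGAux.sg, StB2FGAux.sg'} : Set (StB2Full R)) ∪
      (Set.range fun t : Finset (Fin n) => StB2FGAux.xg (V t)) ∪
      (Set.range fun t : Finset (Fin n) => StB2FGAux.xg' (V t)) with hgenSet
  set H : Subgroup (StB2Full R) := Subgroup.closure genSet with hH
  have hs : StB2FGAux.sg (R := R) ∈ H :=
    Subgroup.subset_closure (Or.inl (Or.inl (Set.mem_insert _ _)))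
  have hs' : StB2FGAux.sg' (R := R) ∈ H :=
    Subgroup.subset_closure (Or.inl (Or.inl (Set.mem_insert_iff.mpr (Or.inr rfl))))
  have hxV : ∀ t : Finset (Fin n), StB2FGAux.xg (V t) ∈ H := fun t =>
    Subgroup.subset_closure (Or.inl (Or.inr ⟨t, rfl⟩))
  have hx'V : ∀ t : Finset (Fin n), StB2FGAux.xg' (V t) ∈ H := fun t =>
    Subgroup.subset_closure (Or.inr ⟨t, rfl⟩)
  have hx1 : StB2FGAux.xg (1 : R) ∈ H := by
    have := hxV ∅
    simpa [hV] using this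
  have hXadd : ∀ a b : R, StB2FGAux.xg a ∈ H → StB2FGAux.xg b ∈ H →
      StB2FGAux.xg (a + b) ∈ H := by
    intro a b ha hb
    rw [← StB2FGAux.xg_add]
    exact mul_mem ha hb
  have hX'add : ∀ a b : R, StB2FGAux.xg' a ∈ H → StB2FGAux.xg' b ∈ H →
      StB2FGAux.xg' (a + b) ∈ H := by
    intro a b ha hb
    rw [← StB2FGAux.xg'_add]
    exact mul_mem ha hb
  have hXneg : ∀ a : R, StB2FGAux.xg a ∈ H → StB2FGAux.xg (-a) ∈ H := by
    intro a ha
    rw [← StB2FGAux.xg_inv]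
    exact inv_mem ha
  have hX'neg : ∀ a : R, StB2FGAux.xg' a ∈ H → StB2FGAux.xg' (-a) ∈ H := by
    intro a ha
    rw [← StB2FGAux.xg'_inv]
    exact inv_mem ha
  have hX0 : StB2FGAux.xg (0 : R) ∈ H := by
    rw [StB2FGAux.xg_zero]; exact one_mem H
  have hX'0 : StB2FGAux.xg' (0 : R) ∈ H := by
    rw [StB2FGAux.xg'_zero]; exact one_mem H
  have hgenj : ∀ j : Fin n,
      StB2FGAux.xg (gen j) ∈ H ∧ StB2FGAux.xg' (gen j) ∈ H := by
    intro j
    constructor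
    · have := hxV {j}
      simpa [hV] using this
    · have := hx'V {j}
      simpa [hV] using this
  -- main monomial induction
  have keyMon : ∀ (d : ℕ) (e : Fin n → ℕ), (∑ i, e i) ≤ d →
      StB2FGAux.xg (∏ i, gen i ^ e i) ∈ H ∧ StB2FGAux.xg' (∏ i, gen i ^ e i) ∈ H := by
    intro d
    induction d with
    | zero =>
      intro e he
      have hz : ∀ i, e i = 0 := by
        intro i
        have := Finset.single_le_sum (f := e) (fun i _ => Nat.zero_le _) (Finset.mem_univ i)
        omega
      have hprod : (∏ i, gen i ^ e i) = V ∅ := by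
        simp [hV, hz]
      rw [hprod]
      exact ⟨hxV ∅, hx'V ∅⟩
    | succ d ih =>
      intro e he
      by_cases hsmall : ∀ i, e i ≤ 1
      · have hprod : (∏ i, gen i ^ e i) = V (Finset.univ.filter fun i => e i = 1) := by
          show (∏ i, gen i ^ e i) = ∏ i ∈ Finset.univ.filter fun i => e i = 1, gen i
          rw [Finset.prod_filter]
          refine Finset.prod_congr rfl fun i _ => ?_
          rcases Nat.le_one_iff_eq_zero_or_eq_one.mp (hsmall i) with h | h <;> simp [h]
        rw [hprod]
        exact ⟨hxV _, hx'V _⟩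
      · push_neg at hsmall
        obtain ⟨j, hj⟩ := hsmall
        set P : R := ∏ i ∈ Finset.univ.erase j, gen i ^ e i with hP
        have hsplit : ∀ k : ℕ,
            (∏ i, gen i ^ (Function.update e j k) i) = gen j ^ k * P := by
          intro k
          rw [← Finset.mul_prod_erase Finset.univ _ (Finset.mem_univ j)]
          congr 1
          · rw [Function.update_self]
          · exact Finset.prod_congr rfl fun i hi => by
              rw [Function.update_of_ne (Finset.ne_of_mem_erase hi)]
        have hsplit0 : (∏ i, gen i ^ e i) = gen j ^ e j * P := by
          rw [← Finset.mul_prod_erase Finset.univ _ (Finset.mem_univ j)]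
        have hsum : ∀ k : ℕ,
            (∑ i, (Function.update e j k) i) = k + ∑ i ∈ Finset.univ.erase j, e i := by
          intro k
          rw [← Finset.add_sum_erase Finset.univ _ (Finset.mem_univ j)]
          congr 1
          · rw [Function.update_self]
          · exact Finset.sum_congr rfl fun i hi => by
              rw [Function.update_of_ne (Finset.ne_of_mem_erase hi)]
        have hsum0 : (∑ i, e i) = e j + ∑ i ∈ Finset.univ.erase j, e i :=
          (Finset.add_sum_erase _ _ (Finset.mem_univ j)).symm
        rw [hsum0] at he
        have h1 := ih (Function.update e j (e j - 2)) (by rw [hsum]; omega)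
        have h2 := ih (Function.update e j (e j - 1)) (by rw [hsum]; omega)
        rw [hsplit] at h1 h2
        have htu : StB2FGAux.xg (gen j * (gen j ^ (e j - 2) * P)) ∈ H := by
          have heq : gen j * (gen j ^ (e j - 2) * P) = gen j ^ (e j - 1) * P := by
            rw [← mul_assoc, ← pow_succ']
            have h3 : e j - 2 + 1 = e j - 1 := by omega
            rw [h3]
          rw [heq]
          exact h2.1
        have hx' := StB2FGAux.ruleC H hs hs' (hgenj j).1 h1.2 htu
        have heq2 : gen j ^ 2 * (gen j ^ (e j - 2) * P) = ∏ i, gen i ^ e i := by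
          rw [hsplit0, ← mul_assoc, ← pow_add]
          have h4 : 2 + (e j - 2) = e j := by omega
          rw [h4]
        rw [heq2] at hx'
        exact ⟨StB2FGAux.ruleB H hs hs' hx1 hx', hx'⟩
  -- integer multiples
  have hint : ∀ (c : ℤ) (r : R),
      (StB2FGAux.xg r ∈ H ∧ StB2FGAux.xg' r ∈ H) →
      (StB2FGAux.xg ((c : R) * r) ∈ H ∧ StB2FGAux.xg' ((c : R) * r) ∈ H) := by
    intro c
    induction c using Int.induction_on with
    | zero =>
      intro r hr
      have h0 : ((0 : ℤ) : R) * r = 0 := by push_cast; ring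
      rw [h0]
      exact ⟨hX0, hX'0⟩
    | succ k ihk =>
      intro r hr
      have h0 : (((k : ℤ) + 1 : ℤ) : R) * r = ((k : ℤ) : R) * r + r := by push_cast; ring
      rw [h0]
      exact ⟨hXadd _ _ (ihk r hr).1 hr.1, hX'add _ _ (ihk r hr).2 hr.2⟩
    | pred k ihk =>
      intro r hr
      have h0 : ((-(k : ℤ) - 1 : ℤ) : R) * r = (((-k : ℤ)) : R) * r + -r := by
        push_cast; ring
      rw [h0]
      exact ⟨hXadd _ _ (ihk r hr).1 (hXneg _ hr.1),
        hX'add _ _ (ihk r hr).2 (hX'neg _ hr.2)⟩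
  -- all monomials of polynomials
  have hmono : ∀ (e : Fin n →₀ ℕ) (c : ℤ),
      StB2FGAux.xg (f (MvPolynomial.monomial e c)) ∈ H ∧
        StB2FGAux.xg' (f (MvPolynomial.monomial e c)) ∈ H := by
    intro e c
    have hfm : f (MvPolynomial.monomial e c) = (c : R) * ∏ i, gen i ^ e i := by
      rw [MvPolynomial.monomial_eq, map_mul, map_finsuppProd]
      simp only [map_pow]
      rw [Finsupp.prod_pow]
      congr 1
      rw [← MvPolynomial.algebraMap_eq, AlgHom.commutes]
      exact eq_intCast (algebraMap ℤ R) c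
    rw [hfm]
    exact hint c _ (keyMon _ e le_rfl)
  have hall : ∀ r : R, StB2FGAux.xg r ∈ H ∧ StB2FGAux.xg' r ∈ H := by
    intro r
    obtain ⟨p, rfl⟩ := hf r
    induction p using MvPolynomial.induction_on' with
    | monomial e c => exact hmono e c
    | add p q hp hq =>
      rw [map_add]
      exact ⟨hXadd _ _ hp.1 hq.1, hX'add _ _ hp.2 hq.2⟩
  have hofs : ∀ j : B2Gen R, (PresentedGroup.of j : StB2Full R) ∈ H := by
    intro j
    cases j with
    | S => exact hs
    | S' => exact hs'
    | X r => exact (hall r).1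
    | X' r => exact (hall r).2
  rw [Group.fg_iff]
  refine ⟨genSet, ?_, ?_⟩
  · rw [eq_top_iff]
    intro g _
    exact PresentedGroup.generated_by _ H hofs g
  · exact (((Set.finite_singleton _).insert _).union (Set.finite_range _)).union
      (Set.finite_range _)
end

section
/- Suppose in addition that there is no ring homomorphism from R to ℤ/2ℤ (equivalently, 𝔽₂ is not a quotient ring of R). Then the subgroup of GL₄(R) generated by the two families {x_s(t) : t ∈ R} and {x_l(t) : t ∈ R} alone equals the subgroup generated by all four families {x_s(t), x_l(t), x_{s′}(t), x_{l′}(t) : t ∈ R}. -/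
/-! Generators for the positive unipotent subgroup of `Sp₄`: the `B₂` case of the lemma
on generators of unipotent groups in rank 2. -/

namespace PaperAmalgams

variable {R : Type*} [CommRing R]

/-- 4×4 matrices over `R`. -/
abbrev M4 (R : Type*) [CommRing R] := Matrix (Fin 4) (Fin 4) R

/-- The matrix unit `E i j`. -/
def E (i j : Fin 4) : M4 R := Matrix.single i j 1

/-- The invertible unipotent matrix `1 + t N`, for `N` with `N² = 0`. -/
def unip (N : M4 R) (hN : N * N = 0) (t : R) : GL (Fin 4) R :=
  ⟨1 + t • N, 1 - t • N, by noncomm_ring; simp [hN], by noncomm_ring; simp [hN]⟩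

/-- The short simple root group element `x_s(t) = 1 + t(E₁₂ − E₃₄)`. -/
def xs (t : R) : GL (Fin 4) R :=
  unip (E 0 1 - E 2 3)
    (by simp [E, sub_mul, mul_sub, Matrix.single_mul_single_of_ne]) t

/-- The long simple root group element `x_l(t) = 1 + t E₂₃`. -/
def xl (t : R) : GL (Fin 4) R :=
  unip (E 1 2) (by simp [E, Matrix.single_mul_single_of_ne]) t

/-- The other positive short root group element `x_{s′}(t) = 1 + t(E₁₃ + E₂₄)`. -/
def xs' (t : R) : GL (Fin 4) R :=
  unip (E 0 2 + E 1 3)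
    (by simp [E, add_mul, mul_add, Matrix.single_mul_single_of_ne]) t

/-- The other positive long root group element `x_{l′}(t) = 1 + t E₁₄`. -/
def xl' (t : R) : GL (Fin 4) R :=
  unip (E 0 3) (by simp [E, Matrix.single_mul_single_of_ne]) t

end PaperAmalgams

section Aux

open PaperAmalgams

variable {R : Type*} [CommRing R]

private lemma unip_mul (N : M4 R) (hN : N * N = 0) (a b : R) :
    unip N hN a * unip N hN b = unip N hN (a + b) := by
  ext : 1
  show (1 + a • N) * (1 + b • N) = 1 + (a + b) • N
  simp [mul_add, add_mul, smul_smul, Matrix.smul_mul, Matrix.mul_smul, hN, add_smul]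
  abel

private lemma unip_inv (N : M4 R) (hN : N * N = 0) (a : R) :
    (unip N hN a)⁻¹ = unip N hN (-a) := by
  ext : 1
  show (1 - a • N) = 1 + (-a) • N
  simp [sub_eq_add_neg]

private lemma unip_zero (N : M4 R) (hN : N * N = 0) : unip N hN 0 = 1 := by
  ext : 1
  show (1 : M4 R) + (0 : R) • N = 1
  simp

private lemma xl'_add (a b : R) : xl' a * xl' b = xl' (a + b) := by
  simp only [xl']; exact unip_mul _ _ a b

private lemma xl'_inv (a : R) : (xl' a)⁻¹ = xl' (-a) := by
  simp only [xl']; exact unip_inv _ _ a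

private lemma xl'_zero : xl' (0 : R) = 1 := by
  simp only [xl']; exact unip_zero _ _

private lemma commA (t u : R) :
    xs t * xl u * (xs t)⁻¹ * (xl u)⁻¹ = xs' (t * u) * xl' (t ^ 2 * u) := by
  ext : 1
  show (1 + t • (E 0 1 - E 2 3)) * (1 + u • E 1 2) * (1 - t • (E 0 1 - E 2 3)) *
      (1 - u • E 1 2) =
    (1 + (t * u) • (E 0 2 + E 1 3)) * (1 + (t ^ 2 * u) • E 0 3)
  ext i j
  fin_cases i <;> fin_cases j <;>
    simp [E, Matrix.mul_apply, Matrix.single, Matrix.one_apply,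
      Fin.sum_univ_four] <;> ring

private lemma commB (t u : R) :
    xs t * xs' u * (xs t)⁻¹ * (xs' u)⁻¹ = xl' (2 * t * u) := by
  ext : 1
  show (1 + t • (E 0 1 - E 2 3)) * (1 + u • (E 0 2 + E 1 3)) *
      (1 - t • (E 0 1 - E 2 3)) * (1 - u • (E 0 2 + E 1 3)) =
    1 + (2 * t * u) • E 0 3
  ext i j
  fin_cases i <;> fin_cases j <;>
    simp [E, Matrix.mul_apply, Matrix.single, Matrix.one_apply,
      Fin.sum_univ_four] <;> ring

private lemma xs_comm_xl' (t v : R) : xs t * xl' v = xl' v * xs t := by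
  ext : 1
  show (1 + t • (E 0 1 - E 2 3)) * (1 + v • E 0 3) =
    (1 + v • E 0 3) * (1 + t • (E 0 1 - E 2 3))
  ext i j
  fin_cases i <;> fin_cases j <;>
    simp [E, Matrix.mul_apply, Matrix.single, Matrix.one_apply,
      Fin.sum_univ_four] <;> ring

private lemma commB' (t u v : R) :
    xs t * (xs' u * xl' v) * (xs t)⁻¹ * (xs' u * xl' v)⁻¹ = xl' (2 * t * u) := by
  have hcm : Commute (xs t) (xl' v) := xs_comm_xl' t v
  have h : xl' v * (xs t)⁻¹ * (xl' v)⁻¹ = (xs t)⁻¹ := by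
    have h1 := hcm.inv_left.eq
    rw [← h1]
    group
  calc xs t * (xs' u * xl' v) * (xs t)⁻¹ * (xs' u * xl' v)⁻¹
      = xs t * xs' u * (xl' v * (xs t)⁻¹ * (xl' v)⁻¹) * (xs' u)⁻¹ := by
        rw [mul_inv_rev]; simp only [mul_assoc]
    _ = xs t * xs' u * (xs t)⁻¹ * (xs' u)⁻¹ := by rw [h]
    _ = xl' (2 * t * u) := commB t u

/-- If `𝔽₂` is not a quotient of `R`, then every element of `R` lies in the additive
subgroup generated by `{2r}` and `{(t²−t)u}`. -/
private lemma mem_closure_gen (h2 : IsEmpty (R →+* ZMod 2)) (v : R) :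
    v ∈ AddSubgroup.closure
      (({x | ∃ r, x = 2 * r} ∪ {x | ∃ t u, x = (t ^ 2 - t) * u}) : Set R) := by
  classical
  set S : Set R := {x | ∃ r, x = 2 * r} ∪ {x | ∃ t u, x = (t ^ 2 - t) * u} with hS
  let J : Ideal R :=
    { carrier := AddSubgroup.closure S
      add_mem' := fun ha hb => add_mem ha hb
      zero_mem' := zero_mem _
      smul_mem' := by
        intro c x hx
        simp only [smul_eq_mul]
        refine AddSubgroup.closure_induction
          (p := fun x _ => c * x ∈ AddSubgroup.closure S) ?_ ?_ ?_ ?_ hx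
        · rintro x (⟨r, rfl⟩ | ⟨t, u, rfl⟩)
          · exact AddSubgroup.subset_closure (Or.inl ⟨c * r, by ring⟩)
          · exact AddSubgroup.subset_closure (Or.inr ⟨t, u * c, by ring⟩)
        · simpa using zero_mem (AddSubgroup.closure S)
        · intro x y _ _ hx hy; rw [mul_add]; exact add_mem hx hy
        · intro x _ hx; rw [mul_neg]; exact neg_mem hx }
  suffices hJ : J = ⊤ by
    have hv : v ∈ J := hJ.ge trivial
    exact hv
  by_contra hJ
  obtain ⟨m, hm, hJm⟩ := Ideal.exists_le_maximal J hJ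
  haveI : m.IsMaximal := hm
  haveI : m.IsPrime := hm.isPrime
  set q : R →+* R ⧸ m := Ideal.Quotient.mk m with hq
  have hSm : ∀ x ∈ S, q x = 0 := fun x hx =>
    Ideal.Quotient.eq_zero_iff_mem.2 (hJm (AddSubgroup.subset_closure hx : x ∈ J))
  have h2q : (2 : R ⧸ m) = 0 := by
    have := hSm 2 (Or.inl ⟨1, by ring⟩)
    exact (map_ofNat q 2).symm.trans this
  have h01 : ∀ y : R ⧸ m, y = 0 ∨ y = 1 := by
    intro y
    obtain ⟨x, rfl⟩ := Ideal.Quotient.mk_surjective y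
    have h := hSm (x ^ 2 - x) (Or.inr ⟨x, 1, by ring⟩)
    have hsq : q x * q x = q x := by
      have h' : q (x ^ 2) - q x = 0 := by rw [← map_sub]; exact h
      have h'' : q x ^ 2 = q x := by rw [← map_pow]; exact sub_eq_zero.mp h'
      calc q x * q x = q x ^ 2 := (sq (q x)).symm
        _ = q x := h''
    have hz : q x * (q x - 1) = 0 := by
      have : q x * (q x - 1) = q x * q x - q x := by ring
      rw [this, hsq, sub_self]
    rcases mul_eq_zero.mp hz with h | h
    · exact Or.inl h
    · exact Or.inr (sub_eq_zero.mp h)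
  have h11 : (1 : R ⧸ m) + 1 = 0 := by
    rw [one_add_one_eq_two]; exact h2q
  let f : R ⧸ m →+* ZMod 2 :=
    { toFun := fun y => if y = 1 then 1 else 0
      map_one' := by simp
      map_mul' := by
        intro x y
        rcases h01 x with rfl | rfl <;> rcases h01 y with rfl | rfl <;>
          simp [zero_ne_one]
      map_zero' := by simp [zero_ne_one]
      map_add' := by
        intro x y
        rcases h01 x with rfl | rfl <;> rcases h01 y with rfl | rfl <;>
          simp [zero_ne_one, h11]
        decide }
  exact h2.elim (f.comp q)

end Aux

open PaperAmalgams in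
/-- If `𝔽₂` is not a quotient of `R` (there is no ring homomorphism `R → ℤ/2ℤ`), then the
subgroup of `GL₄(R)` generated by the two families `x_s`, `x_l` alone equals the subgroup
generated by all four families `x_s`, `x_l`, `x_{s′}`, `x_{l′}`. -/
theorem b2_unipotent_two_families_generate {R : Type*} [CommRing R]
    (h2 : IsEmpty (R →+* ZMod 2)) :
    Subgroup.closure (Set.range (xs (R := R)) ∪ Set.range xl) =
      Subgroup.closure
        (Set.range (xs (R := R)) ∪ Set.range xl ∪ Set.range xs' ∪ Set.range xl') := by
  classical
  set H := Subgroup.closure (Set.range (xs (R := R)) ∪ Set.range xl) with hHdef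
  apply le_antisymm
  · exact Subgroup.closure_mono (fun x hx => Or.inl (Or.inl hx))
  · rw [Subgroup.closure_le]
    have hxsH : ∀ t : R, xs t ∈ H := fun t => Subgroup.subset_closure (Or.inl ⟨t, rfl⟩)
    have hxlH : ∀ t : R, xl t ∈ H := fun t => Subgroup.subset_closure (Or.inr ⟨t, rfl⟩)
    have hc : ∀ t u : R, xs' (t * u) * xl' (t ^ 2 * u) ∈ H := fun t u => by
      rw [← commA]
      exact mul_mem (mul_mem (mul_mem (hxsH t) (hxlH u)) (inv_mem (hxsH t)))
        (inv_mem (hxlH u))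
    have h2r : ∀ r : R, xl' (2 * r) ∈ H := fun r => by
      have hcm := hc 1 r
      have key := commB' (R := R) 1 (1 * r) (1 ^ 2 * r)
      rw [show (2 : R) * 1 * (1 * r) = 2 * r by ring] at key
      rw [← key]
      exact mul_mem (mul_mem (mul_mem (hxsH 1) hcm) (inv_mem (hxsH 1))) (inv_mem hcm)
    have hdiff : ∀ t u : R, xl' ((t ^ 2 - t) * u) ∈ H := fun t u => by
      have h1 := hc t u
      have h2' := hc 1 (t * u)
      simp only [one_mul, one_pow] at h2'
      have key : (xs' (t * u) * xl' (t * u))⁻¹ * (xs' (t * u) * xl' (t ^ 2 * u)) =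
          xl' ((t ^ 2 - t) * u) := by
        rw [mul_inv_rev]
        calc (xl' (t * u))⁻¹ * (xs' (t * u))⁻¹ * (xs' (t * u) * xl' (t ^ 2 * u))
            = (xl' (t * u))⁻¹ * xl' (t ^ 2 * u) := by group
          _ = xl' ((t ^ 2 - t) * u) := by
              rw [xl'_inv, xl'_add]; congr 1; ring
      rw [← key]
      exact mul_mem (inv_mem h2') h1
    have hlall : ∀ v : R, xl' v ∈ H := by
      intro v
      have hv := mem_closure_gen h2 v
      let P : AddSubgroup R :=
        { carrier := {w | xl' w ∈ H}
          zero_mem' := by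
            show xl' (0 : R) ∈ H
            rw [xl'_zero]; exact one_mem H
          add_mem' := by
            intro a b ha hb
            show xl' (a + b) ∈ H
            rw [← xl'_add]; exact mul_mem ha hb
          neg_mem' := by
            intro a ha
            show xl' (-a) ∈ H
            rw [← xl'_inv]; exact inv_mem ha }
      have hsub : ({x | ∃ r, x = 2 * r} ∪ {x | ∃ t u, x = (t ^ 2 - t) * u} : Set R) ⊆ P := by
        rintro x (⟨r, rfl⟩ | ⟨t, u, rfl⟩)
        · exact h2r r
        · exact hdiff t u
      exact (AddSubgroup.closure_le P).2 hsub hv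
    rintro x (((⟨t, rfl⟩ | ⟨t, rfl⟩) | ⟨t, rfl⟩) | ⟨t, rfl⟩)
    · exact hxsH t
    · exact hxlH t
    · have h1 := hc 1 t
      simp only [one_mul, one_pow] at h1
      have hmem := mul_mem h1 (inv_mem (hlall t))
      have : xs' t * xl' t * (xl' t)⁻¹ = xs' t := by group
      rwa [this] at hmem
    · exact hlall t
end

section
/- Let R be a commutative ring such that there is no ring homomorphism from R to ℤ/2ℤ. Then the ideal of R generated by the element 2 together with all elements of the form t² − t (t ∈ R) is the unit ideal (all of R). -/
/-- If there is no ring homomorphism `R → ℤ/2ℤ` (equivalently, `𝔽₂` is not a quotient of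
`R`), then the ideal of `R` generated by `2` together with all elements `t² − t` is the
unit ideal. -/
theorem ideal_two_and_sq_sub_self_eq_top {R : Type*} [CommRing R]
    (h2 : IsEmpty (R →+* ZMod 2)) :
    Ideal.span (insert (2 : R) {x : R | ∃ t : R, x = t ^ 2 - t}) = ⊤ := by
  by_contra hne
  obtain ⟨m, hm, hle⟩ := Ideal.exists_le_maximal _ hne
  haveI := hm
  haveI : m.IsPrime := hm.isPrime
  have h2m : ((2 : ℕ) : R ⧸ m) = 0 := by
    rw [← map_natCast (Ideal.Quotient.mk m) 2]
    refine (Ideal.Quotient.eq_zero_iff_mem).2 ?_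
    exact_mod_cast hle (Ideal.subset_span (Set.mem_insert _ _))
  have hdvd : ringChar (R ⧸ m) ∣ 2 := ringChar.dvd h2m
  have hchar : ringChar (R ⧸ m) = 2 := by
    rcases (Nat.prime_two.eq_one_or_self_of_dvd _ hdvd) with h | h
    · exact absurd h (CharP.ringChar_ne_one)
    · exact h
  haveI : CharP (R ⧸ m) 2 := hchar ▸ ringChar.charP (R ⧸ m)
  let f : ZMod 2 →+* R ⧸ m := ZMod.castHom dvd_rfl (R ⧸ m)
  have hsq : ∀ x : R ⧸ m, x ^ 2 = x := by
    intro x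
    obtain ⟨t, rfl⟩ := Ideal.Quotient.mk_surjective x
    have hmem : t ^ 2 - t ∈ m := hle (Ideal.subset_span (Set.mem_insert_iff.mpr
      (Or.inr ⟨t, rfl⟩)))
    have h0 := (Ideal.Quotient.eq_zero_iff_mem (I := m)).2 hmem
    have h1 : (Ideal.Quotient.mk m t) ^ 2 - Ideal.Quotient.mk m t = 0 := by
      simpa [map_sub, map_pow] using h0
    exact sub_eq_zero.mp h1
  have hbij : Function.Bijective f := by
    constructor
    · exact f.injective
    · intro x
      have hx : x * (x - 1) = 0 := by linear_combination hsq x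
      rcases mul_eq_zero.mp hx with h | h
      · exact ⟨0, by simp [h, f]⟩
      · exact ⟨1, by simp [f, (sub_eq_zero.mp h).symm]⟩
  let e := RingEquiv.ofBijective f hbij
  exact h2.elim (e.symm.toRingHom.comp (Ideal.Quotient.mk m))
end

section
/- Let R be a commutative ring such that there is no ring homomorphism from R to ℤ/2ℤ and no ring homomorphism from R to ℤ/3ℤ. Then the ideal of R generated by the element 6 together with all elements of the form 2(t³ − t) + 3(t² − t) (t ∈ R) is the unit ideal (all of R). -/
/-- If there is no ring homomorphism `R → ℤ/2ℤ` and none `R → ℤ/3ℤ` (equivalently,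
neither `𝔽₂` nor `𝔽₃` is a quotient of `R`), then the ideal of `R` generated by `6`
together with all elements `2(t³ − t) + 3(t² − t)` is the unit ideal. -/
theorem ideal_six_and_cubes_eq_top {R : Type*} [CommRing R]
    (h2 : IsEmpty (R →+* ZMod 2)) (h3 : IsEmpty (R →+* ZMod 3)) :
    Ideal.span
        (insert (6 : R) {x : R | ∃ t : R, x = 2 * (t ^ 3 - t) + 3 * (t ^ 2 - t)}) = ⊤ := by
  by_contra h
  obtain ⟨M, hM, hle⟩ := Ideal.exists_le_maximal _ h
  haveI := hM
  set K := R ⧸ M with hK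
  have h6 : (6 : K) = 0 := by
    have hm : (6 : R) ∈ M :=
      hle (Ideal.subset_span (Set.mem_insert _ _))
    have := (Ideal.Quotient.eq_zero_iff_mem (I := M)).mpr hm
    rwa [map_ofNat] at this
  have hrel : ∀ x : K, 2 * (x ^ 3 - x) + 3 * (x ^ 2 - x) = 0 := by
    intro x
    obtain ⟨t, rfl⟩ := Ideal.Quotient.mk_surjective (I := M) x
    have hm : (2 * (t ^ 3 - t) + 3 * (t ^ 2 - t)) ∈ M :=
      hle (Ideal.subset_span (Set.mem_insert_iff.mpr (Or.inr ⟨t, rfl⟩)))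
    have := (Ideal.Quotient.eq_zero_iff_mem (I := M)).mpr hm
    rw [map_add, map_mul, map_mul, map_sub, map_sub, map_pow, map_pow,
      map_ofNat, map_ofNat] at this
    exact this
  have hdvd : ringChar K ∣ 6 := ringChar.dvd (by exact_mod_cast h6)
  have hp : (ringChar K).Prime := by
    rcases CharP.char_is_prime_or_zero K (ringChar K) with hp | hp
    · exact hp
    · rw [hp] at hdvd; norm_num at hdvd
  have h23 : ringChar K = 2 ∨ ringChar K = 3 := by
    have h2le := hp.two_le
    have h6le := Nat.le_of_dvd (by norm_num) hdvd
    interval_cases h : (ringChar K) <;> simp_all <;> first | omega | norm_num at hp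
  rcases h23 with hc | hc
  · haveI : CharP K 2 := hc ▸ ringChar.charP K
    have h2z : (2 : K) = 0 := by exact_mod_cast CharP.cast_eq_zero K 2
    let f : ZMod 2 →+* K := ZMod.castHom (dvd_refl 2) K
    have hbij : Function.Bijective f := by
      refine ⟨f.injective, fun x => ?_⟩
      have hr := hrel x
      have hb : x * (x - 1) = 0 := by
        linear_combination hr - (x ^ 3 - x + x ^ 2 - x) * h2z
      rcases mul_eq_zero.mp hb with hx | hx
      · exact ⟨0, by simp [hx]⟩
      · exact ⟨1, by simp [sub_eq_zero.mp hx]⟩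
    exact h2.false (((RingEquiv.ofBijective f hbij).symm : K →+* ZMod 2).comp
      (Ideal.Quotient.mk M))
  · haveI : CharP K 3 := hc ▸ ringChar.charP K
    have h3z : (3 : K) = 0 := by exact_mod_cast CharP.cast_eq_zero K 3
    have h2n : (2 : K) = -1 := by linear_combination h3z
    let f : ZMod 3 →+* K := ZMod.castHom (dvd_refl 3) K
    have hbij : Function.Bijective f := by
      refine ⟨f.injective, fun x => ?_⟩
      have hr := hrel x
      have ha : x * (x - 1) * (x + 1) = 0 := by
        linear_combination (x ^ 3 - x + x ^ 2 - x) * h3z - hr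
      rcases mul_eq_zero.mp ha with hx | hx
      · rcases mul_eq_zero.mp hx with hx | hx
        · exact ⟨0, by simp [hx]⟩
        · exact ⟨1, by simp [sub_eq_zero.mp hx]⟩
      · refine ⟨2, ?_⟩
        have hxm : x = -1 := by linear_combination hx
        rw [show ((2 : ZMod 3)) = ((2 : ℕ) : ZMod 3) by norm_num]
        rw [map_natCast, hxm]
        push_cast
        linear_combination h3z
    exact h3.false (((RingEquiv.ofBijective f hbij).symm : K →+* ZMod 3).comp
      (Ideal.Quotient.mk M))
end
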